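/- arXiv:1908.00291 — 3 statements merged into one kernel-verified Lean document; each statement's English description precedes it below -/
import Mathlib

section
/- Let v be an admissible weight function. If sup{ v(x)/v(y) : 0 ≤ x ≤ y } = ∞, then the semigroup 𝒯 = {T_t : t ≥ 0} of left translation operators on C_{0,v}(ℝ₊) has infinite topological entropy: there exists a compact set K ⊆ C_{0,v}(ℝ₊) with h(𝒯,K) = ∞. -/
open MeasureTheory Filter Set
open scoped ENNReal

/-- The `L^p_v` norm of a function on `[0,∞)`:
`‖f‖ = (∫₀^∞ |f(x)|^p v(x) dx)^(1/p)`. -/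
noncomputable def lpNorm (p : ℝ) (v : ℝ → ℝ) (f : ℝ → ℝ) : ℝ :=
  (∫ x in Set.Ici (0:ℝ), |f x| ^ p * v x) ^ (1 / p)

/-- Membership in the weighted Lebesgue space `L^p_v(ℝ₊)`. -/
def MemLpW (p : ℝ) (v : ℝ → ℝ) (f : ℝ → ℝ) : Prop :=
  AEStronglyMeasurable f (volume.restrict (Set.Ici (0:ℝ))) ∧
    IntegrableOn (fun x => |f x| ^ p * v x) (Set.Ici (0:ℝ))

/-- The left translation operator `(T_t f)(x) = f (x + t)`. -/
def translateW (t : ℝ) (f : ℝ → ℝ) : ℝ → ℝ := fun x => f (x + t)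

/-- `v` is an admissible weight function: strictly positive, locally integrable on `[0,∞)`,
and there are `M ≥ 1`, `w ≥ 0` with `v x ≤ M * exp (w*t) * v (x+t)` for all `x, t ≥ 0`. -/
def AdmissibleWeight (v : ℝ → ℝ) : Prop :=
  (∀ x, 0 ≤ x → 0 < v x) ∧
  (∀ a, 0 ≤ a → IntegrableOn v (Set.Icc (0:ℝ) a)) ∧
  ∃ M, 1 ≤ M ∧ ∃ w, 0 ≤ w ∧ ∀ x, 0 ≤ x → ∀ t, 0 ≤ t →
    v x ≤ M * Real.exp (w * t) * v (x + t)

/-- The set `{ v x / v y : 0 ≤ x ≤ y }`. -/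
def ratioSet (v : ℝ → ℝ) : Set ℝ := {r | ∃ x y, 0 ≤ x ∧ x ≤ y ∧ r = v x / v y}

/-- Membership in `C_{0,v}(ℝ₊)`: continuous on `[0,∞)` with `|f x| * v x → 0` as `x → ∞`. -/
def MemC0 (v : ℝ → ℝ) (f : ℝ → ℝ) : Prop :=
  ContinuousOn f (Set.Ici (0:ℝ)) ∧
    Filter.Tendsto (fun x => |f x| * v x) Filter.atTop (nhds 0)

/-- The norm on `C_{0,v}(ℝ₊)`: `‖f‖ = sup { |f x| * v x : x ≥ 0 }`. -/
noncomputable def c0Norm (v : ℝ → ℝ) (f : ℝ → ℝ) : ℝ :=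
  sSup ((fun x => |f x| * v x) '' Set.Ici (0:ℝ))

/-- `S` is a `(t,ε)`-separated set for the family `{T_u : u ≥ 0}` with respect to the
distance `d`: distinct points of `S` are `ε`-apart at some time `u ∈ [0,t]`. -/
def IsSepSet {X : Type*} (d : X → X → ℝ) (T : ℝ → X → X) (t ε : ℝ) (S : Set X) : Prop :=
  ∀ f ∈ S, ∀ g ∈ S, f ≠ g → ∃ u ∈ Set.Icc (0:ℝ) t, ε ≤ d (T u f) (T u g)

/-- The largest cardinality `s_{t,ε}(𝒯,K)` of a `(t,ε)`-separated subset of `K`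
(as an extended natural number, viewed in `ℝ≥0∞`). -/
noncomputable def maxSep {X : Type*} (d : X → X → ℝ) (T : ℝ → X → X) (K : Set X)
    (t ε : ℝ) : ℝ≥0∞ :=
  ⨆ (S : Finset X) (_ : ↑S ⊆ K ∧ IsSepSet d T t ε ↑S), (S.card : ℝ≥0∞)

open Classical in
/-- Extended-real logarithm of an extended nonnegative real. -/
noncomputable def elog (x : ℝ≥0∞) : EReal :=
  if x = ⊤ then ⊤ else ((Real.log x.toReal : ℝ) : EReal)

/-- The topological entropy `h(𝒯,K)` of the family `{T_u : u ≥ 0}` on the set `K`,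
with respect to the distance `d`; since `ε ↦ limsup_t (1/t) log s_{t,ε}` is antitone,
the limit as `ε → 0⁺` is the supremum over `ε > 0`. -/
noncomputable def entropyOn {X : Type*} (d : X → X → ℝ) (T : ℝ → X → X) (K : Set X) : EReal :=
  ⨆ (ε : ℝ) (_ : 0 < ε),
    Filter.limsup (fun t : ℝ => ((t⁻¹ : ℝ) : EReal) * elog (maxSep d T K t ε)) Filter.atTop

/-- Sequential compactness of a set with respect to a (pseudo)distance `d`; for metric
spaces this is equivalent to compactness. -/
def DSeqCompact {X : Type*} (d : X → X → ℝ) (K : Set X) : Prop :=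
  ∀ u : ℕ → X, (∀ n, u n ∈ K) → ∃ g ∈ K, ∃ φ : ℕ → ℕ, StrictMono φ ∧
    Filter.Tendsto (fun n => d (u (φ n)) g) Filter.atTop (nhds 0)

/-- The topological entropy `h(𝒯) = sup { h(𝒯,K) : K ⊆ A compact }` of the family
`{T_u : u ≥ 0}` on the space `A`, with respect to the distance `d`. -/
noncomputable def entropyFam {X : Type*} (d : X → X → ℝ) (T : ℝ → X → X) (A : Set X) : EReal :=
  ⨆ (K : Set X) (_ : K ⊆ A ∧ DSeqCompact d K), entropyOn d T K


noncomputable def tent (c r x : ℝ) : ℝ := max 0 (1 - |x - c| / r)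
lemma tent_nonneg (c r x : ℝ) : 0 ≤ tent c r x := le_max_left _ _
lemma tent_le_one (c r x : ℝ) (hr : 0 < r) : tent c r x ≤ 1 := by
  apply max_le zero_le_one
  have : 0 ≤ |x - c| / r := div_nonneg (abs_nonneg _) hr.le
  linarith
lemma tent_self (c r : ℝ) : tent c r c = 1 := by simp [tent]
lemma tent_eq_zero (c r x : ℝ) (hr : 0 < r) (h : r ≤ |x - c|) : tent c r x = 0 := by
  apply max_eq_left
  have : 1 ≤ |x - c| / r := (one_le_div hr).2 h
  linarith
lemma tent_pos_imp (c r x : ℝ) (hr : 0 < r) (h : tent c r x ≠ 0) : |x - c| < r := by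
  by_contra hc
  exact h (tent_eq_zero c r x hr (not_lt.1 hc))
lemma continuous_tent (c r : ℝ) : Continuous (fun x => tent c r x) := by
  unfold tent; fun_prop

/-- the j-th center -/
noncomputable def qpt (c r : ℝ) (j : ℕ) : ℝ := c + (2*(j:ℝ)+1)*r

lemma qpt_dist (c r : ℝ) (hr : 0 < r) {i j : ℕ} (hij : i ≠ j) :
    2*r ≤ |qpt c r j - qpt c r i| := by
  have h1 : (1:ℝ) ≤ |(j:ℝ) - (i:ℝ)| := by
    rcases hij.lt_or_gt with h | h
    · have : (i:ℝ) + 1 ≤ (j:ℝ) := by exact_mod_cast h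
      rw [abs_of_nonneg (by linarith)]; linarith
    · have : (j:ℝ) + 1 ≤ (i:ℝ) := by exact_mod_cast h
      rw [abs_of_nonpos (by linarith)]; linarith
  have he : qpt c r j - qpt c r i = 2*((j:ℝ) - i)*r := by unfold qpt; ring
  rw [he, abs_mul, abs_mul, abs_of_nonneg hr.le]
  have h2 : |(2:ℝ)| = 2 := by norm_num
  rw [h2]
  nlinarith

lemma tent_qpt_disjoint (c r : ℝ) (hr : 0 < r) {i j : ℕ} (hij : i ≠ j) (x : ℝ)
    (hi : tent (qpt c r i) r x ≠ 0) : tent (qpt c r j) r x = 0 := by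
  apply tent_eq_zero _ _ _ hr
  have h1 := tent_pos_imp _ _ _ hr hi
  have h2 := qpt_dist c r hr hij
  have h4 : |qpt c r j - qpt c r i| ≤ |qpt c r j - x| + |x - qpt c r i| :=
    abs_sub_le _ _ _
  rw [abs_sub_comm x (qpt c r j)]
  linarith

noncomputable def tentFam (c r : ℝ) (N : ℕ) (h : ℝ) (s : Fin N → Bool) : ℝ → ℝ :=
  fun x => h * ∑ j : Fin N, (if s j then tent (qpt c r j) r x else 0)

lemma sum_tent_nonneg (c r : ℝ) (N : ℕ) (s : Fin N → Bool) (x : ℝ) :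
    0 ≤ ∑ j : Fin N, (if s j then tent (qpt c r j) r x else 0) := by
  apply Finset.sum_nonneg
  intro j _
  split
  · exact tent_nonneg _ _ _
  · exact le_refl 0

lemma sum_tent_le_one (c r : ℝ) (hr : 0 < r) (N : ℕ) (s : Fin N → Bool) (x : ℝ) :
    ∑ j : Fin N, (if s j then tent (qpt c r j) r x else 0) ≤ 1 := by
  by_cases hall : ∀ j : Fin N, (if s j then tent (qpt c r j) r x else 0) = 0
  · rw [Finset.sum_eq_zero (fun j _ => hall j)]; norm_num
  · push_neg at hall
    obtain ⟨j₀, hj₀⟩ := hall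
    have hs : s j₀ = true := by
      by_contra hc
      simp [hc] at hj₀
    have ht : tent (qpt c r (j₀:ℕ)) r x ≠ 0 := by
      simpa [hs] using hj₀
    rw [Finset.sum_eq_single j₀]
    · rw [if_pos hs]; exact tent_le_one _ _ _ hr
    · intro b _ hb
      rcases eq_or_ne (s b) true with hsb | hsb
      · rw [if_pos hsb]
        exact tent_qpt_disjoint c r hr (i := (j₀:ℕ)) (j := (b:ℕ))
          (fun he => hb (Fin.ext he).symm) x ht
      · rw [if_neg hsb]
    · intro h; exact absurd (Finset.mem_univ j₀) h

lemma tentFam_abs_le (c r : ℝ) (hr : 0 < r) (N : ℕ) (h : ℝ) (hh : 0 ≤ h)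
    (s : Fin N → Bool) (x : ℝ) : |tentFam c r N h s x| ≤ h := by
  unfold tentFam
  rw [abs_mul, abs_of_nonneg hh,
    abs_of_nonneg (sum_tent_nonneg c r N s x)]
  calc h * ∑ j : Fin N, (if s j then tent (qpt c r j) r x else 0) ≤ h * 1 :=
        mul_le_mul_of_nonneg_left (sum_tent_le_one c r hr N s x) hh
  _ = h := mul_one h

lemma tentFam_eval (c r : ℝ) (hr : 0 < r) (N : ℕ) (h : ℝ) (s : Fin N → Bool)
    (j : Fin N) :
    tentFam c r N h s (qpt c r j) = h * (if s j then 1 else 0) := by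
  unfold tentFam
  congr 1
  rw [Finset.sum_eq_single j]
  · congr 1
    exact tent_self _ _
  · intro b _ hb
    rcases eq_or_ne (s b) true with hsb | hsb
    · rw [if_pos hsb]
      apply tent_eq_zero _ _ _ hr
      have := qpt_dist c r hr (i := (b:ℕ)) (j := (j:ℕ)) (fun he => hb (Fin.ext he))
      linarith
    · rw [if_neg hsb]
  · intro hj; exact absurd (Finset.mem_univ j) hj

lemma tentFam_eq_zero (c r : ℝ) (hr : 0 < r) (N : ℕ) (h : ℝ) (s : Fin N → Bool)
    (x : ℝ) (hx : x < c ∨ c + 2*N*r < x) : tentFam c r N h s x = 0 := by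
  unfold tentFam
  rw [Finset.sum_eq_zero, mul_zero]
  intro j _
  rcases eq_or_ne (s j) true with hsj | hsj
  · rw [if_pos hsj]
    apply tent_eq_zero _ _ _ hr
    have hjN : ((j:ℕ):ℝ) ≤ (N:ℝ) - 1 := by
      have hlt : ((j:ℕ):ℝ) + 1 ≤ (N:ℝ) := by exact_mod_cast Nat.succ_le_of_lt j.isLt
      linarith
    have hj0 : (0:ℝ) ≤ ((j:ℕ):ℝ) := Nat.cast_nonneg _
    unfold qpt
    rcases hx with hx | hx
    · rw [abs_of_nonpos (by nlinarith)]
      nlinarith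
    · rw [abs_of_nonneg (by nlinarith)]
      nlinarith
  · rw [if_neg hsj]

lemma continuous_tentFam (c r : ℝ) (N : ℕ) (h : ℝ) (s : Fin N → Bool) :
    Continuous (tentFam c r N h s) := by
  unfold tentFam
  apply Continuous.mul continuous_const
  apply continuous_finset_sum
  intro j _
  rcases eq_or_ne (s j) true with hsj | hsj
  · simpa [hsj] using continuous_tent (qpt c r j) r
  · simp only [if_neg hsj]
    exact continuous_const

lemma tentFam_inj (c r : ℝ) (hr : 0 < r) (N : ℕ) (h : ℝ) (hh : h ≠ 0) :
    Function.Injective (tentFam c r N h) := by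
  intro s s' he
  funext j
  have h1 := tentFam_eval c r hr N h s j
  have h2 := tentFam_eval c r hr N h s' j
  rw [he] at h1
  have h3 : (if s j then (1:ℝ) else 0) = (if s' j then (1:ℝ) else 0) :=
    mul_left_cancel₀ hh (h1.symm.trans h2)
  cases hsj : s j <;> cases hsj' : s' j <;> simp [hsj, hsj'] at h3 ⊢

lemma c0Norm_le' (v f : ℝ → ℝ) (C : ℝ)
    (hb : ∀ x, 0 ≤ x → |f x| * v x ≤ C) : c0Norm v f ≤ C := by
  apply csSup_le (Set.Nonempty.image _ Set.nonempty_Ici)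
  rintro a ⟨x, hx, rfl⟩
  exact hb x hx

lemma le_c0Norm' (v f : ℝ → ℝ) (C : ℝ) (x₀ : ℝ) (h0 : 0 ≤ x₀)
    (hb : ∀ x, 0 ≤ x → |f x| * v x ≤ C) :
    |f x₀| * v x₀ ≤ c0Norm v f := by
  apply le_csSup
  · exact ⟨C, by rintro a ⟨x, hx, rfl⟩; exact hb x hx⟩
  · exact ⟨x₀, h0, rfl⟩

lemma c0Norm_self_zero (v : ℝ → ℝ) (f : ℝ → ℝ) : c0Norm v (f - f) = 0 := by
  have h : (fun x => |(f - f) x| * v x) = (fun _ : ℝ => (0:ℝ)) := by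
    funext x; simp
  rw [c0Norm, h, Set.Nonempty.image_const Set.nonempty_Ici]
  exact csSup_singleton 0

lemma ereal_inv_mul_le (a L : ℝ) (hL : 0 < L) (X : EReal)
    (h : ((L * a : ℝ) : EReal) ≤ X) : (a : EReal) ≤ ((L⁻¹ : ℝ) : EReal) * X := by
  induction X with
  | bot => exact absurd (le_bot_iff.1 h) (EReal.coe_ne_bot _)
  | coe x =>
      rw [← EReal.coe_mul]
      rw [EReal.coe_le_coe_iff] at h ⊢
      calc a = L⁻¹ * (L * a) := by field_simp
      _ ≤ L⁻¹ * x := by nlinarith [inv_pos.2 hL]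
  | top =>
      rw [EReal.coe_mul_top_of_pos (inv_pos.2 hL)]
      exact le_top

lemma le_elog {N : ℕ} {m : ℝ≥0∞} (h : (2^N : ℝ≥0∞) ≤ m) :
    (((N:ℝ) * Real.log 2 : ℝ) : EReal) ≤ elog m := by
  rw [elog]
  split_ifs with ht
  · exact le_top
  · rw [EReal.coe_le_coe_iff, ← Real.log_pow]
    apply (Real.log_le_log_iff (by positivity) ?_).2
    · have h2 := ENNReal.toReal_mono ht h
      rw [ENNReal.toReal_pow] at h2
      simpa using h2
    · have h3 : (0:ℝ≥0∞) < 2^N := by positivity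
      have h4 : (0:ℝ≥0∞) < m := lt_of_lt_of_le h3 h
      exact ENNReal.toReal_pos h4.ne' ht

lemma qpt_bounds (c r : ℝ) (hr : 0 < r) (N : ℕ) (j : Fin N) :
    c < qpt c r (j:ℕ) ∧ qpt c r (j:ℕ) < c + 2*(N:ℝ)*r := by
  have hj0 : (0:ℝ) ≤ ((j:ℕ):ℝ) := Nat.cast_nonneg _
  have hjN : ((j:ℕ):ℝ) + 1 ≤ (N:ℝ) := by exact_mod_cast Nat.succ_le_of_lt j.isLt
  constructor
  · unfold qpt; nlinarith
  · unfold qpt; nlinarith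

set_option maxHeartbeats 2000000 in
theorem c0_infinite_entropy_of_unbounded_ratio
    (v : ℝ → ℝ) (hv : AdmissibleWeight v)
    (hsup : ∀ B : ℝ, ∃ r ∈ ratioSet v, B < r) :
    ∃ K : Set (ℝ → ℝ), K ⊆ {f | MemC0 v f} ∧
      DSeqCompact (fun f g => c0Norm v (f - g)) K ∧
      entropyOn (fun f g => c0Norm v (f - g)) translateW K = ⊤ := by
  classical
  obtain ⟨hvpos, hvint, M, hM, w, hw0', hvle⟩ := hv
  have hsup' : ∀ B : ℝ, ∃ x y : ℝ, 0 ≤ x ∧ x ≤ y ∧ B < v x / v y := by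
    intro B
    obtain ⟨r, hr, hBr⟩ := hsup B
    obtain ⟨x, y, hx, hxy, rfl⟩ := hr
    exact ⟨x, y, hx, hxy, hBr⟩
  choose X Y hX hXY hB using hsup'
  set Bq : ℕ → ℝ := fun k => ((k:ℝ)+2) * M * Real.exp w with hBq
  set xk : ℕ → ℝ := fun k => X (Bq k) with hxk
  set yk : ℕ → ℝ := fun k => Y (Bq k) with hyk
  set Lk : ℕ → ℝ := fun k => yk k - xk k with hLk
  have hx0 : ∀ k : ℕ, 0 ≤ xk k := fun k => hX _
  have hy0 : ∀ k : ℕ, 0 ≤ yk k := fun k => le_trans (hX _) (hXY _)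
  have hvx : ∀ k : ℕ, 0 < v (xk k) := fun k => hvpos _ (hx0 k)
  have hvy : ∀ k : ℕ, 0 < v (yk k) := fun k => hvpos _ (hy0 k)
  have hL0 : ∀ k : ℕ, 0 ≤ Lk k := fun k => sub_nonneg.2 (hXY _)
  have hratio : ∀ k : ℕ, Bq k * v (yk k) < v (xk k) := by
    intro k
    have h := hB (Bq k)
    rw [lt_div_iff₀ (hvy k)] at h
    exact h
  have hkey : ∀ k : ℕ, Real.log ((k:ℝ)+2) + w < w * Lk k := by
    intro k
    have hup : v (xk k) ≤ M * Real.exp (w * Lk k) * v (yk k) := by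
      have h := hvle (xk k) (hx0 k) (Lk k) (hL0 k)
      have he : xk k + Lk k = yk k := by simp [hLk]
      rwa [he] at h
    have h1 : Bq k * v (yk k) < M * Real.exp (w * Lk k) * v (yk k) :=
      lt_of_lt_of_le (hratio k) hup
    have h2 : Bq k < M * Real.exp (w * Lk k) :=
      lt_of_mul_lt_mul_right (by linarith [h1]) (hvy k).le
    have hM0 : (0:ℝ) < M := lt_of_lt_of_le one_pos hM
    have h3 : ((k:ℝ)+2) * Real.exp w < Real.exp (w * Lk k) := by
      rw [hBq] at h2
      simp only at h2
      nlinarith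
    have h4 : Real.exp (Real.log ((k:ℝ)+2) + w) < Real.exp (w * Lk k) := by
      rw [Real.exp_add, Real.exp_log (by positivity)]
      exact h3
    exact Real.exp_lt_exp.1 h4
  have hlogpos : ∀ k : ℕ, 0 < Real.log ((k:ℝ)+2) := by
    intro k
    apply Real.log_pos
    have : (0:ℝ) ≤ (k:ℝ) := Nat.cast_nonneg _
    linarith
  have hw : 0 < w := by
    rcases hw0'.eq_or_lt with h | h
    · exfalso
      have h2 := hkey 0
      rw [← h] at h2
      simp at h2
      have h3 := hlogpos 0
      simp at h3
      linarith
    · exact h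
  have hL1 : ∀ k : ℕ, 1 < Lk k := by
    intro k
    nlinarith [hkey k, hlogpos k, hw]
  -- parameters of the k-th family
  set Nk : ℕ → ℕ := fun k => ⌈((k:ℝ)+1) * Lk k⌉₊ with hNk
  have hNge : ∀ k : ℕ, ((k:ℝ)+1) * Lk k ≤ (Nk k : ℝ) := fun k => Nat.le_ceil _
  have hNpos : ∀ k : ℕ, 0 < (Nk k : ℝ) := by
    intro k
    have hc : (0:ℝ) ≤ (k:ℝ) := Nat.cast_nonneg _
    have h1 : (0:ℝ) < ((k:ℝ)+1) * Lk k := by nlinarith [hL1 k]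
    linarith [hNge k]
  set rk : ℕ → ℝ := fun k => 1 / (2 * (Nk k : ℝ)) with hrk
  have hrpos : ∀ k : ℕ, 0 < rk k := by
    intro k
    rw [hrk]
    simp only
    exact div_pos one_pos (by linarith [hNpos k])
  have hNr : ∀ k : ℕ, 2 * (Nk k : ℝ) * rk k = 1 := by
    intro k
    rw [hrk]
    simp only
    rw [mul_one_div]
    exact div_self (ne_of_gt (by linarith [hNpos k]))
  set ck : ℕ → ℝ := fun k => yk k - 1 with hck
  have hcN : ∀ k : ℕ, ck k + 2 * (Nk k : ℝ) * rk k = yk k := by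
    intro k
    rw [hNr k, hck]
    ring
  set hk : ℕ → ℝ := fun k => 1 / v (xk k) with hhk
  have hhpos : ∀ k : ℕ, 0 < hk k := by
    intro k
    rw [hhk]
    exact div_pos one_pos (hvx k)
  set F : ∀ k : ℕ, (Fin (Nk k) → Bool) → (ℝ → ℝ) :=
    fun k => tentFam (ck k) (rk k) (Nk k) (hk k) with hF
  set Sk : ℕ → Finset (ℝ → ℝ) := fun k => Finset.image (F k) Finset.univ with hSk
  -- pointwise bound
  have hbound : ∀ k : ℕ, ∀ (s : Fin (Nk k) → Bool), ∀ x, 0 ≤ x →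
      |F k s x| * v x ≤ 1/((k:ℝ)+2) := by
    intro k s x hx
    simp only [hF]
    by_cases hin : ck k ≤ x ∧ x ≤ yk k
    · have hFb : |tentFam (ck k) (rk k) (Nk k) (hk k) s x| ≤ hk k :=
        tentFam_abs_le _ _ (hrpos k) _ _ (hhpos k).le s x
      have hMw : (0:ℝ) < M := lt_of_lt_of_le one_pos hM
      have hvxb : v x ≤ M * Real.exp w * v (yk k) := by
        have h := hvle x hx (yk k - x) (by linarith [hin.2])
        rw [show x + (yk k - x) = yk k by ring] at h
        have hck1 : yk k - 1 ≤ x := by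
          have h2 := hin.1
          rw [hck] at h2
          exact h2
        have hexp : Real.exp (w * (yk k - x)) ≤ Real.exp w := by
          apply Real.exp_le_exp.2
          nlinarith
        calc v x ≤ M * Real.exp (w*(yk k - x)) * v (yk k) := h
        _ ≤ M * Real.exp w * v (yk k) := by
            have h5 := mul_le_mul_of_nonneg_left hexp hMw.le
            exact mul_le_mul_of_nonneg_right h5 (hvy k).le
      have hcomb : |tentFam (ck k) (rk k) (Nk k) (hk k) s x| * v x
          ≤ hk k * (M * Real.exp w * v (yk k)) :=
        mul_le_mul hFb hvxb (hvpos x hx).le (hhpos k).le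
      have hkc : (0:ℝ) ≤ (k:ℝ) := Nat.cast_nonneg _
      calc |tentFam (ck k) (rk k) (Nk k) (hk k) s x| * v x
          ≤ hk k * (M * Real.exp w * v (yk k)) := hcomb
      _ = (M * Real.exp w * v (yk k)) / v (xk k) := by rw [hhk]; ring
      _ ≤ 1/((k:ℝ)+2) := by
          rw [div_le_div_iff₀ (hvx k) (by linarith)]
          have h := hratio k
          rw [hBq] at h
          simp only at h
          nlinarith
    · have hor : x < ck k ∨ ck k + 2*((Nk k):ℝ)*(rk k) < x := by
        rcases lt_or_ge x (ck k) with h | h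
        · exact Or.inl h
        · push_neg at hin
          right
          rw [hcN k]
          exact hin h
      rw [tentFam_eq_zero _ _ (hrpos k) _ _ s x hor]
      have hkc : (0:ℝ) ≤ (k:ℝ) := Nat.cast_nonneg _
      simp only [abs_zero, zero_mul]
      positivity
  -- membership
  have hmem : ∀ k : ℕ, ∀ (s : Fin (Nk k) → Bool), MemC0 v (F k s) := by
    intro k s
    simp only [hF]
    constructor
    · exact (continuous_tentFam _ _ _ _ _).continuousOn
    · have hev : (fun x => |tentFam (ck k) (rk k) (Nk k) (hk k) s x| * v x)
          =ᶠ[atTop] (fun _ => (0:ℝ)) := by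
        filter_upwards [eventually_gt_atTop (yk k)] with x hx
        rw [tentFam_eq_zero _ _ (hrpos k) _ _ s x (Or.inr (by rw [hcN k]; exact hx))]
        simp
      exact Tendsto.congr' hev.symm tendsto_const_nhds
  -- separation
  have hsep : ∀ k : ℕ, ∀ t, Lk k ≤ t →
      IsSepSet (fun f g => c0Norm v (f - g)) translateW t 1 (↑(Sk k)) := by
    intro k t ht
    intro f hf g hg hfg
    simp only [Finset.mem_coe, hSk, Finset.mem_image, Finset.mem_univ, true_and] at hf hg
    obtain ⟨s, rfl⟩ := hf
    obtain ⟨s', rfl⟩ := hg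
    have hss' : s ≠ s' := fun he => hfg (by rw [he])
    obtain ⟨j, hj⟩ := Function.ne_iff.1 hss'
    have hqb := qpt_bounds (ck k) (rk k) (hrpos k) (Nk k) j
    set q := qpt (ck k) (rk k) (j:ℕ) with hq
    have hq2 : q < yk k := by
      rw [← hcN k]
      exact hqb.2
    have hq1 : ck k < q := hqb.1
    set u := q - xk k with hu
    have hLdef : Lk k = yk k - xk k := rfl
    have hckdef : ck k = yk k - 1 := rfl
    have hxq : xk k ≤ ck k := by
      have hL' := hL1 k
      rw [hLdef] at hL'
      rw [hckdef]
      linarith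
    have hu0 : 0 ≤ u := by rw [hu]; linarith
    have hut : u ≤ t := by
      rw [hu]
      have hLt : Lk k ≤ t := ht
      rw [hLdef] at hLt
      linarith
    refine ⟨u, ⟨hu0, hut⟩, ?_⟩
    set G := translateW u (F k s) - translateW u (F k s') with hG
    have hGapp : ∀ z : ℝ, G z = F k s (z+u) - F k s' (z+u) := fun z => rfl
    have hMw : (0:ℝ) < M := lt_of_lt_of_le one_pos hM
    have hGb : ∀ z, 0 ≤ z →
        |G z| * v z ≤ 2 * hk k * (M * Real.exp (w * yk k) * v (yk k)) := by
      intro z hz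
      by_cases hzin : ck k ≤ z + u ∧ z + u ≤ yk k
      · have h1 : |F k s (z+u)| ≤ hk k := by
          simp only [hF]
          exact tentFam_abs_le _ _ (hrpos k) _ _ (hhpos k).le s (z+u)
        have h2 : |F k s' (z+u)| ≤ hk k := by
          simp only [hF]
          exact tentFam_abs_le _ _ (hrpos k) _ _ (hhpos k).le s' (z+u)
        have h3 : |G z| ≤ 2 * hk k := by
          rw [hGapp z]
          calc |F k s (z+u) - F k s' (z+u)| ≤ |F k s (z+u)| + |F k s' (z+u)| :=
            abs_sub _ _
          _ ≤ 2 * hk k := by linarith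
        have hvz : v z ≤ M * Real.exp (w * yk k) * v (yk k) := by
          have hzyk : z ≤ yk k := by
            have h4 := hzin.2
            linarith
          have h := hvle z hz (yk k - z) (by linarith)
          rw [show z + (yk k - z) = yk k by ring] at h
          have hee : Real.exp (w*(yk k - z)) ≤ Real.exp (w * yk k) :=
            Real.exp_le_exp.2 (by nlinarith)
          calc v z ≤ M * Real.exp (w*(yk k - z)) * v (yk k) := h
          _ ≤ M * Real.exp (w * yk k) * v (yk k) := by
              have h5 := mul_le_mul_of_nonneg_left hee hMw.le
              exact mul_le_mul_of_nonneg_right h5 (hvy k).le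
        calc |G z| * v z ≤ (2 * hk k) * (M * Real.exp (w * yk k) * v (yk k)) :=
          mul_le_mul h3 hvz (hvpos z hz).le (by linarith [hhpos k])
        _ = 2 * hk k * (M * Real.exp (w * yk k) * v (yk k)) := by ring
      · have hor : z + u < ck k ∨ ck k + 2*((Nk k):ℝ)*(rk k) < z + u := by
          rcases lt_or_ge (z+u) (ck k) with h | h
          · exact Or.inl h
          · push_neg at hzin
            right
            rw [hcN k]
            exact hzin h
        have hz1 : F k s (z+u) = 0 := by
          simp only [hF]
          exact tentFam_eq_zero _ _ (hrpos k) _ _ s (z+u) hor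
        have hz2 : F k s' (z+u) = 0 := by
          simp only [hF]
          exact tentFam_eq_zero _ _ (hrpos k) _ _ s' (z+u) hor
        rw [hGapp z, hz1, hz2]
        simp only [sub_zero, abs_zero, zero_mul]
        have hq3 := hhpos k
        have hq4 := hvy k
        have hq5 := Real.exp_pos (w * yk k)
        exact le_of_lt (mul_pos (by linarith) (mul_pos (mul_pos hMw hq5) hq4))
    have hle := le_c0Norm' v G _ (xk k) (hx0 k) hGb
    have hxu : xk k + u = q := by rw [hu]; ring
    have hGx : |G (xk k)| * v (xk k) = 1 := by
      have e1 : G (xk k) = F k s q - F k s' q := by rw [hGapp (xk k), hxu]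
      have e2 : F k s q = hk k * (if s j then 1 else 0) := by
        simp only [hF, hq]
        exact tentFam_eval _ _ (hrpos k) _ _ s j
      have e3 : F k s' q = hk k * (if s' j then 1 else 0) := by
        simp only [hF, hq]
        exact tentFam_eval _ _ (hrpos k) _ _ s' j
      have habs : |(if s j then (1:ℝ) else 0) - (if s' j then 1 else 0)| = 1 := by
        by_cases hsj : s j = true <;> by_cases hsj' : s' j = true
        · exact absurd (hsj.trans hsj'.symm) hj
        · rw [if_pos hsj, if_neg hsj']; norm_num
        · rw [if_neg hsj, if_pos hsj']; norm_num
        · exfalso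
          apply hj
          rw [Bool.not_eq_true] at hsj hsj'
          rw [hsj, hsj']
      rw [e1, e2, e3, ← mul_sub, abs_mul, habs, mul_one, abs_of_pos (hhpos k)]
      rw [hhk]
      simp only
      rw [one_div]
      exact inv_mul_cancel₀ (hvx k).ne'
    rw [hGx] at hle
    exact hle
  -- cardinality
  have hcard : ∀ k : ℕ, (Sk k).card = 2^(Nk k) := by
    intro k
    rw [hSk]
    simp only
    rw [Finset.card_image_of_injective _ (tentFam_inj _ _ (hrpos k) _ _ (hhpos k).ne')]
    simp [Fintype.card_fun]
  set K : Set (ℝ → ℝ) := insert 0 (⋃ k, (↑(Sk k) : Set (ℝ → ℝ))) with hK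
  refine ⟨K, ?_, ?_, ?_⟩
  · -- K ⊆ MemC0
    rintro f (rfl | hf)
    · refine ⟨continuousOn_const, ?_⟩
      have h : (fun x : ℝ => |(0:ℝ→ℝ) x| * v x) = fun _ => (0:ℝ) := by
        funext x; simp
      rw [h]
      exact tendsto_const_nhds
    · rw [Set.mem_iUnion] at hf
      obtain ⟨k, hkk⟩ := hf
      rw [Finset.mem_coe, hSk] at hkk
      simp only [Finset.mem_image, Finset.mem_univ, true_and] at hkk
      obtain ⟨s, rfl⟩ := hkk
      exact hmem k s
  · -- DSeqCompact
    intro u hu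
    by_cases hrec : ∃ f, ∃ᶠ n in atTop, u n = f
    · obtain ⟨f, hf⟩ := hrec
      obtain ⟨φ, hφ, hφf⟩ := Filter.extraction_of_frequently_atTop hf
      refine ⟨f, ?_, φ, hφ, ?_⟩
      · rw [← hφf 0]; exact hu (φ 0)
      · have he : ∀ n, c0Norm v (u (φ n) - f) = 0 := by
          intro n; rw [hφf n]; exact c0Norm_self_zero v f
        show Tendsto (fun n => c0Norm v (u (φ n) - f)) atTop (nhds 0)
        simp only [he]
        exact tendsto_const_nhds
    · push_neg at hrec
      have hev : ∀ f : ℝ → ℝ, ∀ᶠ n in atTop, u n ≠ f := by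
        intro f
        exact hrec f
      refine ⟨0, Set.mem_insert _ _, id, strictMono_id, ?_⟩
      show Tendsto (fun n => c0Norm v (u (id n) - 0)) atTop (nhds 0)
      rw [NormedAddCommGroup.tendsto_nhds_zero]
      intro ε hε
      obtain ⟨k, hk'⟩ := exists_nat_gt (1/ε)
      have hek : 1 < ε * (k:ℝ) := by
        rw [div_lt_iff₀ hε] at hk'
        linarith
      set Fs : Finset (ℝ → ℝ) := insert 0 ((Finset.range (k+1)).biUnion Sk) with hFs
      have hev2 : ∀ᶠ n in atTop, ∀ f ∈ Fs, u n ≠ f :=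
        (Finset.eventually_all Fs).2 (fun f _ => hev f)
      filter_upwards [hev2] with n hn
      have hnot : u n ∉ Fs := fun hmemf => hn (u n) hmemf rfl
      have hun : u n ∈ insert 0 (⋃ m, (↑(Sk m) : Set (ℝ → ℝ))) := hK ▸ hu n
      rcases Set.mem_insert_iff.1 hun with h0 | hUn
      · exfalso
        apply hnot
        rw [h0, hFs]
        exact Finset.mem_insert_self 0 _
      · obtain ⟨m, hm⟩ := Set.mem_iUnion.1 hUn
        have hmk : k + 1 ≤ m := by
          by_contra hc
          push_neg at hc
          apply hnot
          rw [hFs]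
          exact Finset.mem_insert_of_mem
            (Finset.mem_biUnion.2 ⟨m, Finset.mem_range.2 hc, hm⟩)
        rw [Finset.mem_coe, hSk] at hm
        simp only [Finset.mem_image, Finset.mem_univ, true_and] at hm
        obtain ⟨s, hs⟩ := hm
        have hbpt : ∀ x, 0 ≤ x → |(u n - 0) x| * v x ≤ 1/((m:ℝ)+2) := by
          intro x hx
          have : (u n - 0) x = F m s x := by rw [sub_zero, ← hs]
          rw [this]
          exact hbound m s x hx
        have hnn : 0 ≤ c0Norm v (u n - 0) := by
          refine le_trans ?_ (le_c0Norm' v _ _ 0 le_rfl hbpt)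
          exact mul_nonneg (abs_nonneg _) (hvpos 0 le_rfl).le
        have hub : c0Norm v (u n - 0) ≤ 1/((m:ℝ)+2) := by
          apply c0Norm_le' v _ _ hbpt
        rw [id_eq, Real.norm_eq_abs, abs_of_nonneg hnn]
        have hmc : (k:ℝ) + 1 ≤ (m:ℝ) := by exact_mod_cast hmk
        have hkc : (0:ℝ) ≤ (k:ℝ) := Nat.cast_nonneg _
        have hmpos : (0:ℝ) < (m:ℝ) + 2 := by linarith
        have : 1/((m:ℝ)+2) < ε := by
          rw [div_lt_iff₀ hmpos]
          nlinarith
        linarith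
  · -- entropy
    have hKsub2 : ∀ k : ℕ, (↑(Sk k) : Set (ℝ → ℝ)) ⊆ K := by
      intro k f hf
      rw [hK]
      exact Set.mem_insert_of_mem _ (Set.mem_iUnion.2 ⟨k, hf⟩)
    have hlog2 : 0 < Real.log 2 := Real.log_pos one_lt_two
    have hlim : Filter.limsup (fun t : ℝ => ((t⁻¹ : ℝ) : EReal) *
        elog (maxSep (fun f g => c0Norm v (f - g)) translateW K t 1))
        Filter.atTop = ⊤ := by
      rw [EReal.eq_top_iff_forall_lt]
      intro y
      obtain ⟨n, hn⟩ := exists_nat_gt (y / Real.log 2)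
      have hyn : y < (n:ℝ) * Real.log 2 := by
        rw [div_lt_iff₀ hlog2] at hn
        linarith
      have hmain : (((n:ℝ) * Real.log 2 : ℝ) : EReal) ≤
          Filter.limsup (fun t : ℝ => ((t⁻¹ : ℝ) : EReal) *
          elog (maxSep (fun f g => c0Norm v (f - g)) translateW K t 1))
          Filter.atTop := by
        apply le_limsup_of_frequently_le'
        rw [Filter.frequently_atTop]
        intro a
        set k := max n ⌈Real.exp (w * a)⌉₊ with hkdef
        have hkn : n ≤ k := le_max_left _ _
        have hLa : a ≤ Lk k := by
          have h1 : Real.exp (w*a) ≤ (k:ℝ) := by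
            calc Real.exp (w*a) ≤ (⌈Real.exp (w * a)⌉₊ : ℝ) := Nat.le_ceil _
            _ ≤ (k:ℝ) := by exact_mod_cast Nat.cast_le.2 (le_max_right _ _)
          have h2 : w * a ≤ Real.log ((k:ℝ)+2) := by
            rw [Real.le_log_iff_exp_le (by positivity)]
            linarith
          have h3 := hkey k
          nlinarith [hw]
        refine ⟨Lk k, by linarith, ?_⟩
        have hle2 := le_iSup₂ (f := fun (S : Finset (ℝ → ℝ))
            (_ : (↑S : Set (ℝ → ℝ)) ⊆ K ∧
              IsSepSet (fun f g => c0Norm v (f - g)) translateW (Lk k) 1 ↑S) =>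
            (S.card : ℝ≥0∞)) (Sk k) ⟨hKsub2 k, hsep k (Lk k) le_rfl⟩
        rw [hcard k] at hle2
        have hms : (2^(Nk k) : ℝ≥0∞) ≤
            maxSep (fun f g => c0Norm v (f - g)) translateW K (Lk k) 1 := by
          rw [maxSep]
          exact_mod_cast hle2
        have helog := le_elog hms
        have hLpos : (0:ℝ) < Lk k := lt_trans one_pos (hL1 k)
        have hstep : ((Lk k * ((n:ℝ) * Real.log 2) : ℝ) : EReal) ≤
            elog (maxSep (fun f g => c0Norm v (f - g)) translateW K (Lk k) 1) := by
          refine le_trans ?_ helog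
          rw [EReal.coe_le_coe_iff]
          have h6 : ((n:ℝ)) * Lk k ≤ ((Nk k) : ℝ) := by
            have h7 := hNge k
            have hc : (n:ℝ) ≤ (k:ℝ) := Nat.cast_le.2 hkn
            nlinarith
          nlinarith
        exact ereal_inv_mul_le ((n:ℝ) * Real.log 2) (Lk k) hLpos _ hstep
      exact lt_of_lt_of_le (EReal.coe_lt_coe_iff.2 hyn) hmain
    apply top_unique
    rw [entropyOn]
    refine le_iSup₂_of_le 1 one_pos ?_
    exact hlim.ge
end

section
/- Let 0 < p < ∞ and let v be an admissible weight function, and let 𝒯 = {T_t : t ≥ 0} be the semigroup of left translation operators on X = L^p_v(ℝ₊). If f ∈ X with f ≠ 0 is a recurrent point of 𝒯, i.e., there exists a sequence t_1 < t_2 < t_3 < ⋯ with t_k → ∞ and ‖T_{t_k} f − f‖ → 0, then there exists a > 0 such that ‖(T_t f)·χ_{[0,a]}‖ does not converge to 0 as t → ∞. -/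
open MeasureTheory Filter Set
open scoped ENNReal

lemma aux_add_rpow {p A B : ℝ} (hp : 0 < p) (hA : 0 ≤ A) (hB : 0 ≤ B) :
    (A + B) ^ p ≤ 2 ^ p * (A ^ p + B ^ p) := by
  have h1 : A + B ≤ 2 * max A B := by
    rcases le_total A B with h | h
    · rw [max_eq_right h]; linarith
    · rw [max_eq_left h]; linarith
  have h2 : (A + B) ^ p ≤ (2 * max A B) ^ p :=
    Real.rpow_le_rpow (by positivity) h1 hp.le
  have h3 : (2 * max A B) ^ p = 2 ^ p * (max A B) ^ p :=
    Real.mul_rpow (by norm_num) (le_max_of_le_left hA)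
  have h4 : (max A B) ^ p ≤ A ^ p + B ^ p := by
    rcases le_total A B with h | h
    · rw [max_eq_right h]
      have := Real.rpow_nonneg hA p; linarith
    · rw [max_eq_left h]
      have := Real.rpow_nonneg hB p; linarith
  calc (A + B) ^ p ≤ 2 ^ p * (max A B) ^ p := by rw [← h3]; exact h2
    _ ≤ 2 ^ p * (A ^ p + B ^ p) := by
        have h5 : (0:ℝ) < 2 ^ p := Real.rpow_pos_of_pos (by norm_num) p
        nlinarith

lemma aux_mp_shift (t : ℝ) :
    MeasurePreserving (fun x => x + t) (volume.restrict (Ici (0:ℝ)))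
      (volume.restrict (Ici t)) := by
  have h := (measurePreserving_add_right (volume : Measure ℝ) t).restrict_preimage
    (measurableSet_Ici (a := t))
  simpa [preimage_add_const_Ici] using h

lemma aux_aesm_translate {f : ℝ → ℝ}
    (hf : AEStronglyMeasurable f (volume.restrict (Ici (0:ℝ)))) {t : ℝ} (ht : 0 ≤ t) :
    AEStronglyMeasurable (fun x => f (x + t)) (volume.restrict (Ici (0:ℝ))) :=
  (hf.mono_measure (Measure.restrict_mono (Ici_subset_Ici.2 ht) le_rfl)).comp_measurePreserving
    (aux_mp_shift t)

lemma aux_int_translate {F : ℝ → ℝ} (hF : IntegrableOn F (Ici (0:ℝ)))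
    {t : ℝ} (ht : 0 ≤ t) : IntegrableOn (fun x => F (x + t)) (Ici (0:ℝ)) := by
  have h1 : IntegrableOn F (Ici t) := hF.mono_set (Ici_subset_Ici.2 ht)
  have h2 := (measurePreserving_add_right (volume : Measure ℝ) t).integrableOn_comp_preimage
    (f := F) (s := Ici t) (MeasurableEquiv.addRight t).measurableEmbedding
  rw [show ((fun x => x + t) ⁻¹' Ici t) = Ici (0:ℝ) by simp [preimage_add_const_Ici]] at h2
  exact h2.mpr h1

lemma aux_tendsto_sq {ι : Type*} {l : Filter ι} {g : ι → ℝ} {p : ℝ} (hp : 0 < p)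
    (hg : ∀ i, 0 ≤ g i) (h : Tendsto (fun i => (g i) ^ (1/p)) l (nhds 0)) :
    Tendsto g l (nhds 0) := by
  have hc : ContinuousAt (fun x : ℝ => x ^ p) 0 :=
    Real.continuousAt_rpow_const 0 p (Or.inr hp.le)
  have h2 := (hc.tendsto.comp h)
  rw [Real.zero_rpow hp.ne'] at h2
  have heq : (fun i => ((g i) ^ (1/p)) ^ p) = g := by
    funext i
    rw [← Real.rpow_mul (hg i), one_div_mul_cancel hp.ne', Real.rpow_one]
  rw [show ((fun x : ℝ => x ^ p) ∘ fun i => (g i) ^ (1/p)) = fun i => ((g i) ^ (1/p)) ^ p from rfl,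
    heq] at h2
  exact h2

theorem lp_recurrent_implies_not_tendsto_zero_on_interval
    (p : ℝ) (hp : 0 < p) (v : ℝ → ℝ) (hv : AdmissibleWeight v)
    (f : ℝ → ℝ) (hf : MemLpW p v f) (hfne : lpNorm p v f ≠ 0)
    (hrec : ∃ tk : ℕ → ℝ, (∀ k, 0 ≤ tk k) ∧ StrictMono tk ∧
      Filter.Tendsto tk Filter.atTop Filter.atTop ∧
      Filter.Tendsto (fun k => lpNorm p v (translateW (tk k) f - f)) Filter.atTop (nhds 0)) :
    ∃ a > (0:ℝ),
      ¬ Filter.Tendsto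
        (fun t => (∫ x in Set.Icc (0:ℝ) a, |f (x + t)| ^ p * v x) ^ (1 / p))
        Filter.atTop (nhds 0) := by
  obtain ⟨hf1, hf2⟩ := hf
  obtain ⟨hvpos, hvint, M, hM, w, hw, hvb⟩ := hv
  obtain ⟨tk, htk0, _, htktop, htknorm⟩ := hrec
  by_contra hcon
  push_neg at hcon
  have hIciU : (⋃ n : ℕ, Icc (0:ℝ) (n+1)) = Ici 0 := by
    ext x
    simp only [mem_iUnion, mem_Icc, mem_Ici]
    constructor
    · rintro ⟨n, h1, _⟩; exact h1
    · intro hx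
      exact ⟨⌈x⌉₊, hx, (Nat.le_ceil x).trans (by linarith)⟩
  have hvmeas : AEStronglyMeasurable v (volume.restrict (Ici (0:ℝ))) := by
    rw [← hIciU]
    exact aestronglyMeasurable_iUnion_iff.mpr fun n =>
      (hvint (n+1) (by positivity)).aestronglyMeasurable
  -- measurability of translated integrand
  have hGtmeas : ∀ t, 0 ≤ t → AEStronglyMeasurable (fun x => |f (x+t)| ^ p * v x)
      (volume.restrict (Ici (0:ℝ))) := by
    intro t ht
    have h1 : AEStronglyMeasurable (fun x => ‖f (x+t)‖ ^ p * v x)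
        (volume.restrict (Ici (0:ℝ))) :=
      ((Real.continuous_rpow_const hp.le).comp_aestronglyMeasurable
        (aux_aesm_translate hf1 ht).norm).mul hvmeas
    simpa only [Real.norm_eq_abs] using h1
  -- integrability of translated integrand
  have hGt : ∀ t, 0 ≤ t → IntegrableOn (fun x => |f (x+t)| ^ p * v x) (Ici (0:ℝ)) := by
    intro t ht
    refine Integrable.mono'
      ((aux_int_translate hf2 ht).const_mul (M * Real.exp (w*t))) (hGtmeas t ht) ?_
    filter_upwards [ae_restrict_mem measurableSet_Ici] with x hx
    have hnn : (0:ℝ) ≤ |f (x+t)| ^ p * v x :=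
      mul_nonneg (Real.rpow_nonneg (abs_nonneg _) _) (hvpos x hx).le
    rw [Real.norm_of_nonneg hnn]
    have h1 := hvb x hx t ht
    have h2 : (0:ℝ) ≤ |f (x+t)| ^ p := Real.rpow_nonneg (abs_nonneg _) _
    calc |f (x+t)| ^ p * v x ≤ |f (x+t)| ^ p * (M * Real.exp (w*t) * v (x+t)) :=
          mul_le_mul_of_nonneg_left h1 h2
      _ = M * Real.exp (w*t) * (|f (x+t)| ^ p * v (x+t)) := by ring
  -- integrability of the difference integrand
  have hdk : ∀ t, 0 ≤ t → IntegrableOn (fun x => |f (x+t) - f x| ^ p * v x) (Ici (0:ℝ)) := by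
    intro t ht
    have hmeas : AEStronglyMeasurable (fun x => |f (x+t) - f x| ^ p * v x)
        (volume.restrict (Ici (0:ℝ))) := by
      have h1 : AEStronglyMeasurable (fun x => ‖f (x+t) - f x‖ ^ p * v x)
          (volume.restrict (Ici (0:ℝ))) :=
        ((Real.continuous_rpow_const hp.le).comp_aestronglyMeasurable
          ((aux_aesm_translate hf1 ht).sub hf1).norm).mul hvmeas
      simpa only [Real.norm_eq_abs] using h1
    refine Integrable.mono' (((hGt t ht).add hf2).const_mul (2 ^ p)) hmeas ?_
    filter_upwards [ae_restrict_mem measurableSet_Ici] with x hx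
    have hnn : (0:ℝ) ≤ |f (x+t) - f x| ^ p * v x :=
      mul_nonneg (Real.rpow_nonneg (abs_nonneg _) _) (hvpos x hx).le
    rw [Real.norm_of_nonneg hnn]
    have h0 : |f (x+t) - f x| ≤ |f (x+t)| + |f x| := by
      calc |f (x+t) - f x| = |f (x+t) + -(f x)| := by rw [sub_eq_add_neg]
        _ ≤ |f (x+t)| + |-(f x)| := abs_add_le _ _
        _ = |f (x+t)| + |f x| := by rw [abs_neg]
    have h1 : |f (x+t) - f x| ^ p ≤ (|f (x+t)| + |f x|) ^ p :=
      Real.rpow_le_rpow (abs_nonneg _) h0 hp.le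
    have h2 := aux_add_rpow hp (abs_nonneg (f (x+t))) (abs_nonneg (f x))
    calc |f (x+t) - f x| ^ p * v x
        ≤ (2 ^ p * (|f (x+t)| ^ p + |f x| ^ p)) * v x :=
          mul_le_mul_of_nonneg_right (h1.trans h2) (hvpos x hx).le
      _ = 2 ^ p * (|f (x+t)| ^ p * v x + |f x| ^ p * v x) := by ring
  -- the difference integrals tend to 0
  have hD : Tendsto (fun k => ∫ x in Ici (0:ℝ), |f (x + tk k) - f x| ^ p * v x)
      atTop (nhds 0) := by
    refine aux_tendsto_sq hp (fun k => ?_) ?_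
    · exact setIntegral_nonneg measurableSet_Ici fun x hx =>
        mul_nonneg (Real.rpow_nonneg (abs_nonneg _) _) (hvpos x hx).le
    · simpa only [_root_.lpNorm, translateW, Pi.sub_apply] using htknorm
  -- the windowed integrals tend to 0
  have hI : ∀ a, 0 < a →
      Tendsto (fun t => ∫ x in Icc (0:ℝ) a, |f (x+t)| ^ p * v x) atTop (nhds 0) := by
    intro a ha
    refine aux_tendsto_sq hp (fun t => ?_) (hcon a ha)
    exact setIntegral_nonneg measurableSet_Icc fun x hx =>
      mul_nonneg (Real.rpow_nonneg (abs_nonneg _) _) (hvpos x hx.1).le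
  -- each windowed integral of f itself vanishes
  have hIcc0 : ∀ a, 0 < a → (∫ x in Icc (0:ℝ) a, |f x| ^ p * v x) = 0 := by
    intro a ha
    have hCnn : 0 ≤ ∫ x in Icc (0:ℝ) a, |f x| ^ p * v x :=
      setIntegral_nonneg measurableSet_Icc fun x hx =>
        mul_nonneg (Real.rpow_nonneg (abs_nonneg _) _) (hvpos x hx.1).le
    have hkey : ∀ k, (∫ x in Icc (0:ℝ) a, |f x| ^ p * v x) ≤
        2 ^ p * ((∫ x in Ici (0:ℝ), |f (x + tk k) - f x| ^ p * v x) +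
          (∫ x in Icc (0:ℝ) a, |f (x + tk k)| ^ p * v x)) := by
      intro k
      have ht : 0 ≤ tk k := htk0 k
      have hdkI := hdk (tk k) ht
      have hGtI := hGt (tk k) ht
      have step1 : (∫ x in Icc (0:ℝ) a, |f x| ^ p * v x) ≤
          ∫ x in Icc (0:ℝ) a,
            2 ^ p * (|f (x + tk k) - f x| ^ p * v x + |f (x + tk k)| ^ p * v x) := by
        refine setIntegral_mono_on (hf2.mono_set Icc_subset_Ici_self)
          (((hdkI.mono_set Icc_subset_Ici_self).add
            (hGtI.mono_set Icc_subset_Ici_self)).const_mul _) measurableSet_Icc ?_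
        intro x hx
        have h0 : |f x| ≤ |f (x + tk k) - f x| + |f (x + tk k)| := by
          have h0' : |f x| = |(f x - f (x + tk k)) + f (x + tk k)| := by ring_nf
          rw [h0']
          calc |(f x - f (x + tk k)) + f (x + tk k)|
              ≤ |f x - f (x + tk k)| + |f (x + tk k)| := abs_add_le _ _
            _ = |f (x + tk k) - f x| + |f (x + tk k)| := by rw [abs_sub_comm]
        have h1 : |f x| ^ p ≤ (|f (x + tk k) - f x| + |f (x + tk k)|) ^ p :=
          Real.rpow_le_rpow (abs_nonneg _) h0 hp.le
        have h2 := aux_add_rpow hp (abs_nonneg (f (x + tk k) - f x)) (abs_nonneg (f (x + tk k)))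
        calc |f x| ^ p * v x
            ≤ (2 ^ p * (|f (x + tk k) - f x| ^ p + |f (x + tk k)| ^ p)) * v x :=
              mul_le_mul_of_nonneg_right (h1.trans h2) (hvpos x hx.1).le
          _ = 2 ^ p * (|f (x + tk k) - f x| ^ p * v x + |f (x + tk k)| ^ p * v x) := by ring
      have step2 : (∫ x in Icc (0:ℝ) a,
            2 ^ p * (|f (x + tk k) - f x| ^ p * v x + |f (x + tk k)| ^ p * v x)) =
          2 ^ p * ((∫ x in Icc (0:ℝ) a, |f (x + tk k) - f x| ^ p * v x) +
            (∫ x in Icc (0:ℝ) a, |f (x + tk k)| ^ p * v x)) := by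
        rw [integral_const_mul, integral_add (hdkI.mono_set Icc_subset_Ici_self)
          (hGtI.mono_set Icc_subset_Ici_self)]
      have step3 : (∫ x in Icc (0:ℝ) a, |f (x + tk k) - f x| ^ p * v x) ≤
          ∫ x in Ici (0:ℝ), |f (x + tk k) - f x| ^ p * v x := by
        refine setIntegral_mono_set hdkI ?_ (HasSubset.Subset.eventuallyLE Icc_subset_Ici_self)
        filter_upwards [ae_restrict_mem measurableSet_Ici] with x hx
        exact mul_nonneg (Real.rpow_nonneg (abs_nonneg _) _) (hvpos x hx).le
      have h2p : (0:ℝ) < 2 ^ p := Real.rpow_pos_of_pos (by norm_num) p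
      calc (∫ x in Icc (0:ℝ) a, |f x| ^ p * v x)
          ≤ 2 ^ p * ((∫ x in Icc (0:ℝ) a, |f (x + tk k) - f x| ^ p * v x) +
              (∫ x in Icc (0:ℝ) a, |f (x + tk k)| ^ p * v x)) := by rw [← step2]; exact step1
        _ ≤ 2 ^ p * ((∫ x in Ici (0:ℝ), |f (x + tk k) - f x| ^ p * v x) +
              (∫ x in Icc (0:ℝ) a, |f (x + tk k)| ^ p * v x)) := by nlinarith [step3]
    have htend : Tendsto (fun k => 2 ^ p *
        ((∫ x in Ici (0:ℝ), |f (x + tk k) - f x| ^ p * v x) +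
          (∫ x in Icc (0:ℝ) a, |f (x + tk k)| ^ p * v x))) atTop (nhds 0) := by
      have h1 := (hD.add ((hI a ha).comp htktop)).const_mul (2 ^ p : ℝ)
      simpa using h1
    have hle := ge_of_tendsto' htend hkey
    linarith
  -- conclude f has zero norm
  have hmono : Monotone (fun n : ℕ => Icc (0:ℝ) ((n:ℝ)+1)) := by
    intro m n hmn
    exact Icc_subset_Icc le_rfl (by have := (Nat.cast_le (α := ℝ)).2 hmn; linarith)
  have htendU := tendsto_setIntegral_of_monotone (μ := volume)
    (f := fun x => |f x| ^ p * v x)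
    (fun n : ℕ => measurableSet_Icc) hmono (by rw [hIciU]; exact hf2)
  rw [hIciU] at htendU
  have hzero : (fun n : ℕ => ∫ x in Icc (0:ℝ) ((n:ℝ)+1), |f x| ^ p * v x) =
      fun _ => (0:ℝ) := funext fun n => hIcc0 ((n:ℝ)+1) (by positivity)
  rw [hzero] at htendU
  have hfin : (∫ x in Ici (0:ℝ), |f x| ^ p * v x) = 0 :=
    (tendsto_nhds_unique tendsto_const_nhds htendU).symm
  exact hfne (by rw [_root_.lpNorm, hfin, Real.zero_rpow (one_div_ne_zero hp.ne')])
end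

section
/- Let 0 < p < ∞ and let v be an admissible weight function, and let 𝒯 = {T_t : t ≥ 0} be the semigroup of left translation operators on X = L^p_v(ℝ₊). If there exist f, g ∈ X forming a Li-Yorke scrambled pair for 𝒯, then 𝒯 has infinite topological entropy. -/
open MeasureTheory Filter Set
open scoped ENNReal

namespace LYE

noncomputable def el (p : ℝ) (v : ℝ → ℝ) (f : ℝ → ℝ) : ℝ≥0∞ :=
  ∫⁻ x in Set.Ici (0:ℝ), ENNReal.ofReal (|f x| ^ p * v x)

variable {p : ℝ} {v : ℝ → ℝ}

lemma aesm_v (hv : AdmissibleWeight v) :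
    AEStronglyMeasurable v (volume.restrict (Set.Ici (0:ℝ))) := by
  have h : Set.Ici (0:ℝ) = ⋃ n : ℕ, Set.Icc (0:ℝ) n := by
    ext x
    simp only [Set.mem_Ici, Set.mem_iUnion, Set.mem_Icc]
    constructor
    · intro hx
      obtain ⟨n, hn⟩ := exists_nat_ge x
      exact ⟨n, hx, hn⟩
    · rintro ⟨n, hx, _⟩; exact hx
  rw [h, aestronglyMeasurable_iUnion_iff]
  intro n
  exact (hv.2.1 n n.cast_nonneg).aestronglyMeasurable

lemma aesm_integrand (hp : 0 < p) (hv : AdmissibleWeight v)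
    (hf : AEStronglyMeasurable f (volume.restrict (Set.Ici (0:ℝ)))) :
    AEStronglyMeasurable (fun x => |f x| ^ p * v x) (volume.restrict (Set.Ici (0:ℝ))) := by
  have h1 : AEStronglyMeasurable (fun x => |f x| ^ p) (volume.restrict (Set.Ici (0:ℝ))) := by
    have : Continuous (fun x : ℝ => |x| ^ p) :=
      (Real.continuous_rpow_const hp.le).comp continuous_abs
    exact this.comp_aestronglyMeasurable hf
  exact h1.mul (aesm_v hv)

lemma integrand_nonneg_ae (hv : AdmissibleWeight v) (f : ℝ → ℝ) :
    0 ≤ᵐ[volume.restrict (Set.Ici (0:ℝ))] (fun x => |f x| ^ p * v x) := by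
  apply ae_restrict_of_forall_mem measurableSet_Ici
  intro x hx
  exact mul_nonneg (Real.rpow_nonneg (abs_nonneg _) _) (hv.1 x hx).le

lemma lpNorm_eq (hp : 0 < p) (hv : AdmissibleWeight v)
    (hf : AEStronglyMeasurable f (volume.restrict (Set.Ici (0:ℝ)))) :
    lpNorm p v f = (el p v f).toReal ^ (1 / p) := by
  unfold _root_.lpNorm el
  rw [integral_eq_lintegral_of_nonneg_ae (integrand_nonneg_ae hv f) (aesm_integrand hp hv hf)]

lemma el_lt_top_of_integrableOn
    (hf : IntegrableOn (fun x => |f x| ^ p * v x) (Set.Ici (0:ℝ))) :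
    el p v f < ⊤ := by
  have := hf.2
  rw [hasFiniteIntegral_iff_norm] at this
  refine lt_of_le_of_lt ?_ this
  apply lintegral_mono
  intro x
  refine ENNReal.ofReal_le_ofReal ?_
  rw [Real.norm_eq_abs]
  exact le_abs_self _

lemma memLpW_of (hp : 0 < p) (hv : AdmissibleWeight v)
    (hf : AEStronglyMeasurable f (volume.restrict (Set.Ici (0:ℝ))))
    (hel : el p v f < ⊤) : MemLpW p v f := by
  refine ⟨hf, ?_⟩
  constructor
  · exact aesm_integrand hp hv hf
  · rw [hasFiniteIntegral_iff_ofReal (integrand_nonneg_ae hv f)]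
    exact hel

lemma lpNorm_zero (hp : 0 < p) : lpNorm p v (0 : ℝ → ℝ) = 0 := by
  unfold _root_.lpNorm
  have : ∀ x : ℝ, |(0:ℝ→ℝ) x| ^ p * v x = 0 := by
    intro x
    simp [Real.zero_rpow hp.ne']
  simp only [this]
  rw [integral_zero]
  exact Real.zero_rpow (by positivity)

lemma lpNorm_nonneg (hp : 0 < p) (hv : AdmissibleWeight v)
    (hf : AEStronglyMeasurable f (volume.restrict (Set.Ici (0:ℝ)))) :
    0 ≤ lpNorm p v f := by
  rw [lpNorm_eq hp hv hf]
  positivity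

end LYE

namespace LYE

variable {p : ℝ} {v : ℝ → ℝ} {f g X Y : ℝ → ℝ} {t : ℝ}

lemma abs_sub_rpow_le (hp : 0 < p) (a b : ℝ) :
    |a - b| ^ p ≤ 2 ^ p * (|a| ^ p + |b| ^ p) := by
  have h1 : |a - b| ≤ 2 * max |a| |b| := by
    calc |a - b| ≤ |a| + |b| := abs_sub _ _
    _ ≤ max |a| |b| + max |a| |b| := by
        exact add_le_add (le_max_left _ _) (le_max_right _ _)
    _ = 2 * max |a| |b| := by ring
  calc |a - b| ^ p ≤ (2 * max |a| |b|) ^ p :=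
        Real.rpow_le_rpow (abs_nonneg _) h1 hp.le
  _ = 2 ^ p * (max |a| |b|) ^ p := by
        rw [Real.mul_rpow (by norm_num) (le_max_iff.mpr (Or.inl (abs_nonneg _)))]
  _ ≤ 2 ^ p * (|a| ^ p + |b| ^ p) := by
        have : (max |a| |b|) ^ p ≤ |a| ^ p + |b| ^ p := by
          rcases max_cases |a| |b| with ⟨h, _⟩ | ⟨h, _⟩ <;> rw [h]
          · nlinarith [Real.rpow_nonneg (abs_nonneg b) p]
          · nlinarith [Real.rpow_nonneg (abs_nonneg a) p]
        nlinarith [Real.rpow_nonneg (by norm_num : (0:ℝ) ≤ 2) p]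

lemma memLpW_sub (hp : 0 < p) (hv : AdmissibleWeight v)
    (hf : MemLpW p v f) (hg : MemLpW p v g) : MemLpW p v (f - g) := by
  refine ⟨hf.1.sub hg.1, ?_⟩
  have hbound : Integrable (fun x => 2 ^ p * (|f x| ^ p * v x + |g x| ^ p * v x))
      (volume.restrict (Set.Ici (0:ℝ))) := (hf.2.add hg.2).const_mul _
  refine hbound.mono' (aesm_integrand hp hv (hf.1.sub hg.1)) ?_
  filter_upwards [integrand_nonneg_ae (p := p) hv (f - g),
    ae_restrict_of_forall_mem (μ := volume) measurableSet_Ici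
      (fun x (hx : x ∈ Set.Ici (0:ℝ)) => (hv.1 x hx).le)] with x h0 hvx
  rw [Real.norm_eq_abs, abs_of_nonneg h0]
  have := abs_sub_rpow_le hp (f x) (g x)
  calc |(f - g) x| ^ p * v x = |f x - g x| ^ p * v x := rfl
  _ ≤ (2 ^ p * (|f x| ^ p + |g x| ^ p)) * v x := by
      exact mul_le_mul_of_nonneg_right this hvx
  _ = 2 ^ p * (|f x| ^ p * v x + |g x| ^ p * v x) := by ring

lemma ae_translate {F G : ℝ → ℝ} (h : F =ᵐ[volume.restrict (Set.Ici (0:ℝ))] G) (ht : 0 ≤ t) :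
    (fun x => F (x + t)) =ᵐ[volume.restrict (Set.Ici (0:ℝ))] (fun x => G (x + t)) := by
  have hN : volume ({y | F y ≠ G y} ∩ Set.Ici (0:ℝ)) = 0 := by
    have := h
    rw [Filter.EventuallyEq, ae_iff, Measure.restrict_apply' measurableSet_Ici] at this
    exact this
  rw [Filter.EventuallyEq, ae_iff, Measure.restrict_apply' measurableSet_Ici]
  have hsub : {x | (fun x => F (x + t)) x ≠ (fun x => G (x + t)) x} ∩ Set.Ici (0:ℝ)
      ⊆ (fun x => x + t) ⁻¹' ({y | F y ≠ G y} ∩ Set.Ici (0:ℝ)) := by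
    rintro x ⟨hx1, hx2⟩
    exact ⟨hx1, by simp only [Set.mem_Ici] at hx2 ⊢; linarith⟩
  refine measure_mono_null hsub ?_
  rw [measure_preimage_add_right]
  exact hN

lemma aesm_translate (hf : AEStronglyMeasurable f (volume.restrict (Set.Ici (0:ℝ))))
    (ht : 0 ≤ t) :
    AEStronglyMeasurable (translateW t f) (volume.restrict (Set.Ici (0:ℝ))) := by
  refine ⟨fun x => hf.mk f (x + t), (hf.stronglyMeasurable_mk).comp_measurable
    (measurable_add_const t), ?_⟩
  exact ae_translate hf.ae_eq_mk ht

lemma lintegral_shift (F : ℝ → ℝ≥0∞) (t : ℝ) :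
    ∫⁻ x, F (x + t) = ∫⁻ x, F x :=
  lintegral_add_right_eq_self F t

lemma el_translate_le (hv : AdmissibleWeight v) {M w : ℝ} (hM : 1 ≤ M)
    (hadm : ∀ x, 0 ≤ x → ∀ s, 0 ≤ s → v x ≤ M * Real.exp (w * s) * v (x + s))
    (ht : 0 ≤ t) (f : ℝ → ℝ) :
    el p v (translateW t f) ≤ ENNReal.ofReal (M * Real.exp (w * t)) * el p v f := by
  have step1 : el p v (translateW t f) ≤
      ∫⁻ x in Set.Ici (0:ℝ), ENNReal.ofReal (M * Real.exp (w * t)) *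
        ENNReal.ofReal (|f (x + t)| ^ p * v (x + t)) := by
    unfold el
    refine lintegral_mono_ae ?_
    filter_upwards [ae_restrict_of_forall_mem (μ := volume) measurableSet_Ici
      (fun x (hx : x ∈ Set.Ici (0:ℝ)) => hadm x hx t ht)] with x hx
    rw [← ENNReal.ofReal_mul (by positivity)]
    refine ENNReal.ofReal_le_ofReal ?_
    calc |translateW t f x| ^ p * v x ≤ |f (x + t)| ^ p * (M * Real.exp (w * t) * v (x + t)) := by
          refine mul_le_mul_of_nonneg_left hx (Real.rpow_nonneg (abs_nonneg _) _)
    _ = M * Real.exp (w * t) * (|f (x + t)| ^ p * v (x + t)) := by ring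
  rw [lintegral_const_mul' _ _ ENNReal.ofReal_ne_top] at step1
  refine step1.trans ?_
  refine mul_le_mul_right ?_ _
  -- change of variables
  have key : ∫⁻ x in Set.Ici (0:ℝ), ENNReal.ofReal (|f (x + t)| ^ p * v (x + t))
      = ∫⁻ y in Set.Ici t, ENNReal.ofReal (|f y| ^ p * v y) := by
    rw [← lintegral_indicator measurableSet_Ici, ← lintegral_indicator measurableSet_Ici]
    rw [← lintegral_shift (Set.Ici t |>.indicator fun y => ENNReal.ofReal (|f y| ^ p * v y)) t]
    congr 1
    ext x
    by_cases hx : (0:ℝ) ≤ x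
    · rw [Set.indicator_of_mem (Set.mem_Ici.mpr hx),
        Set.indicator_of_mem (Set.mem_Ici.mpr (by linarith : t ≤ x + t))]
    · rw [Set.indicator_of_notMem (by simpa using hx),
        Set.indicator_of_notMem (by simp only [Set.mem_Ici]; intro h; exact hx (by linarith))]
  rw [key]
  unfold el
  exact lintegral_mono' (Measure.restrict_mono (Set.Ici_subset_Ici.mpr ht) le_rfl) le_rfl

lemma el_translate_lt_top (hp : 0 < p) (hv : AdmissibleWeight v)
    (hf : MemLpW p v f) (ht : 0 ≤ t) : el p v (translateW t f) < ⊤ := by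
  obtain ⟨M, hM, w, hw, hadm⟩ := hv.2.2
  refine lt_of_le_of_lt (el_translate_le hv hM hadm ht f) ?_
  exact ENNReal.mul_lt_top ENNReal.ofReal_lt_top (el_lt_top_of_integrableOn hf.2)

lemma memLpW_translate (hp : 0 < p) (hv : AdmissibleWeight v)
    (hf : MemLpW p v f) (ht : 0 ≤ t) : MemLpW p v (translateW t f) :=
  memLpW_of hp hv (aesm_translate hf.1 ht) (el_translate_lt_top hp hv hf ht)

end LYE

namespace LYE

variable {p : ℝ} {v : ℝ → ℝ} {X Y : ℝ → ℝ} {t : ℝ}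

lemma translateW_sub (t : ℝ) (X Y : ℝ → ℝ) :
    translateW t (X - Y) = translateW t X - translateW t Y := rfl

lemma el_disjoint_add (hp : 0 < p) (hv : AdmissibleWeight v)
    (hX : AEStronglyMeasurable X (volume.restrict (Set.Ici (0:ℝ))))
    (hY : AEStronglyMeasurable Y (volume.restrict (Set.Ici (0:ℝ))))
    (hdisj : ∀ ξ, X ξ ≠ 0 → Y ξ = 0) :
    el p v (X - Y) = el p v X + el p v Y := by
  have hpt : ∀ x : ℝ, x ∈ Set.Ici (0:ℝ) →
      ENNReal.ofReal (|(X - Y) x| ^ p * v x)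
        = ENNReal.ofReal (|X x| ^ p * v x) + ENNReal.ofReal (|Y x| ^ p * v x) := by
    intro x hx
    have hvx : 0 ≤ v x := (hv.1 x hx).le
    by_cases h : X x = 0
    · have : (X - Y) x = - Y x := by simp [h]
      rw [this, abs_neg]
      rw [h, abs_zero, Real.zero_rpow hp.ne', zero_mul, ENNReal.ofReal_zero, zero_add]
    · have hYx : Y x = 0 := hdisj x h
      have : (X - Y) x = X x := by simp [hYx]
      rw [this, hYx, abs_zero, Real.zero_rpow hp.ne', zero_mul, ENNReal.ofReal_zero, add_zero]
  unfold el
  rw [setLIntegral_congr_fun measurableSet_Ici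
    hpt]
  exact lintegral_add_left' (aesm_integrand hp hv hX).aemeasurable.ennreal_ofReal _

lemma sep_lower (hp : 0 < p) (hv : AdmissibleWeight v)
    (hX : MemLpW p v X) (hY : MemLpW p v Y)
    (hdisj : ∀ ξ, X ξ ≠ 0 → Y ξ = 0) (ht : 0 ≤ t) :
    lpNorm p v (translateW t X) ≤ lpNorm p v (translateW t X - translateW t Y) := by
  have haX := aesm_translate hX.1 ht
  have haY := aesm_translate hY.1 ht
  have hdisj' : ∀ ξ, translateW t X ξ ≠ 0 → translateW t Y ξ = 0 := by
    intro ξ hξ; exact hdisj (ξ + t) hξ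
  have hel_add : el p v (translateW t X - translateW t Y)
      = el p v (translateW t X) + el p v (translateW t Y) :=
    el_disjoint_add hp hv haX haY hdisj'
  have hfin : el p v (translateW t X - translateW t Y) < ⊤ := by
    rw [hel_add]
    exact ENNReal.add_lt_top.mpr ⟨el_translate_lt_top hp hv hX ht, el_translate_lt_top hp hv hY ht⟩
  have hle : el p v (translateW t X) ≤ el p v (translateW t X - translateW t Y) := by
    rw [hel_add]; exact le_self_add
  rw [lpNorm_eq hp hv haX, lpNorm_eq hp hv (haX.sub haY)]
  refine Real.rpow_le_rpow ENNReal.toReal_nonneg ?_ (by positivity)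
  exact ENNReal.toReal_mono hfin.ne hle

end LYE

namespace LYE

lemma split2 (m : Measure ℝ) (hatom : ∀ r : ℝ, m {r} = 0) (S : Set ℝ) (hS : 0 < m S) :
    ∃ r : ℝ, 0 < m (S ∩ Set.Iic r) ∧ 0 < m (S \ Set.Iic r) := by
  by_contra hcon
  push_neg at hcon
  have hdich : ∀ r : ℝ, m (S ∩ Set.Iic r) = 0 ∨ m (S \ Set.Iic r) = 0 := by
    intro r
    by_cases h1 : m (S ∩ Set.Iic r) = 0
    · exact Or.inl h1
    · right
      have := hcon r (pos_iff_ne_zero.mpr h1)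
      exact le_antisymm this zero_le
  set Z : Set ℝ := {r | m (S \ Set.Iic r) = 0} with hZ
  by_cases hZne : Z.Nonempty
  · by_cases hbdd : BddBelow Z
    · set r0 := sInf Z with hr0
      have claim1 : m (S ∩ Set.Iio r0) = 0 := by
        have hsub : S ∩ Set.Iio r0 ⊆ ⋃ n : ℕ, S ∩ Set.Iic (r0 - 1/(n+1)) := by
          rintro x ⟨hxS, hx⟩
          have hpos : 0 < r0 - x := by simpa [sub_pos] using hx
          obtain ⟨n, hn⟩ := exists_nat_one_div_lt hpos
          refine Set.mem_iUnion.mpr ⟨n, hxS, ?_⟩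
          simp only [Set.mem_Iic]
          push_cast
          linarith [hn]
        refine measure_mono_null hsub ?_
        rw [measure_iUnion_null_iff]
        intro n
        have hr : r0 - 1/(n+1) < r0 := by
          have : (0:ℝ) < 1/((n:ℝ)+1) := by positivity
          linarith
        rcases hdich (r0 - 1/(n+1)) with h | h
        · exact h
        · exfalso
          have : r0 - 1/(n+1) ∈ Z := h
          have := csInf_le hbdd this
          rw [← hr0] at this
          linarith
      have claim2 : m (S \ Set.Iic r0) = 0 := by
        have hsub : S \ Set.Iic r0 ⊆ ⋃ n : ℕ, S \ Set.Iic (r0 + 1/(n+1)) := by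
          rintro x ⟨hxS, hx⟩
          simp only [Set.mem_Iic, not_le] at hx
          have hpos : 0 < x - r0 := by linarith
          obtain ⟨n, hn⟩ := exists_nat_one_div_lt hpos
          refine Set.mem_iUnion.mpr ⟨n, hxS, ?_⟩
          simp only [Set.mem_Iic, not_le]
          push_cast
          linarith [hn]
        refine measure_mono_null hsub ?_
        rw [measure_iUnion_null_iff]
        intro n
        have : r0 < r0 + 1/(n+1) := by
          have : (0:ℝ) < 1/((n:ℝ)+1) := by positivity
          linarith
        obtain ⟨z, hzZ, hz⟩ := exists_lt_of_csInf_lt hZne (by rw [← hr0]; exact this)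
        refine measure_mono_null ?_ hzZ
        intro x hx
        exact ⟨hx.1, fun hc => hx.2 (le_trans (Set.mem_Iic.mp hc) hz.le)⟩
      have hcover : S ⊆ (S ∩ Set.Iio r0) ∪ ((S ∩ {r0}) ∪ (S \ Set.Iic r0)) := by
        intro x hx
        rcases lt_trichotomy x r0 with h | h | h
        · exact Or.inl ⟨hx, h⟩
        · exact Or.inr (Or.inl ⟨hx, h⟩)
        · exact Or.inr (Or.inr ⟨hx, by simp [Set.mem_Iic, not_le.mpr h]⟩)
      have : m S = 0 := by
        refine measure_mono_null hcover ?_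
        refine measure_union_null claim1 (measure_union_null ?_ claim2)
        exact measure_mono_null Set.inter_subset_right (hatom r0)
      exact hS.ne' this
    · -- Z not bounded below
      have : m S = 0 := by
        have hsub : S ⊆ ⋃ n : ℕ, S \ Set.Iic (-(n:ℝ)) := by
          intro x hx
          obtain ⟨n, hn⟩ := exists_nat_gt (-x)
          refine Set.mem_iUnion.mpr ⟨n, hx, ?_⟩
          simp only [Set.mem_Iic, not_le]
          linarith
        refine measure_mono_null hsub ?_
        rw [measure_iUnion_null_iff]
        intro n
        rw [not_bddBelow_iff] at hbdd
        obtain ⟨z, hzZ, hz⟩ := hbdd (-(n:ℝ))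
        refine measure_mono_null ?_ hzZ
        intro x hx
        exact ⟨hx.1, fun hc => hx.2 (le_trans (Set.mem_Iic.mp hc) hz.le)⟩
      exact hS.ne' this
  · -- Z empty
    have hall : ∀ r : ℝ, m (S ∩ Set.Iic r) = 0 := by
      intro r
      rcases hdich r with h | h
      · exact h
      · exact absurd ⟨r, h⟩ hZne
    have : m S = 0 := by
      have hsub : S ⊆ ⋃ n : ℕ, S ∩ Set.Iic (n:ℝ) := by
        intro x hx
        obtain ⟨n, hn⟩ := exists_nat_ge x
        exact Set.mem_iUnion.mpr ⟨n, hx, hn⟩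
      refine measure_mono_null hsub ?_
      rw [measure_iUnion_null_iff]
      exact fun n => hall n
    exact hS.ne' this

lemma exists_slices (m : Measure ℝ) (hatom : ∀ r : ℝ, m {r} = 0) :
    ∀ (N : ℕ) (S : Set ℝ), MeasurableSet S → 0 < m S →
    ∃ E : ℕ → Set ℝ, (∀ i, MeasurableSet (E i)) ∧ (∀ i, E i ⊆ S) ∧ (∀ i < N, 0 < m (E i)) ∧
      (∀ i j, i ≠ j → ∀ x, x ∈ E i → x ∉ E j) := by
  intro N
  induction N with
  | zero =>
    intro S _ _
    exact ⟨fun _ => ∅, fun _ => MeasurableSet.empty, fun _ => Set.empty_subset _,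
      fun i hi => absurd hi (Nat.not_lt_zero i), fun _ _ _ _ hx => absurd hx (Set.notMem_empty _)⟩
  | succ N ih =>
    intro S hS hpos
    obtain ⟨r, h1, h2⟩ := split2 m hatom S hpos
    obtain ⟨E', hE'm, hE's, hE'p, hE'd⟩ := ih (S \ Set.Iic r) (hS.diff measurableSet_Iic) h2
    refine ⟨fun i => if i = 0 then S ∩ Set.Iic r else E' (i - 1), ?_, ?_, ?_, ?_⟩
    · intro i
      simp only
      by_cases h : i = 0
      · rw [if_pos h]
        exact hS.inter measurableSet_Iic
      · rw [if_neg h]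
        exact hE'm _
    · intro i
      simp only
      by_cases h : i = 0
      · rw [if_pos h]
        exact Set.inter_subset_left
      · rw [if_neg h]
        exact (hE's _).trans Set.diff_subset
    · intro i hi
      simp only
      by_cases h : i = 0
      · rw [if_pos h]
        exact h1
      · rw [if_neg h]
        refine hE'p _ ?_
        omega
    · intro i j hij x hxi hxj
      simp only at hxi hxj
      by_cases h : i = 0
      · have hj : j ≠ 0 := by omega
        rw [if_pos h] at hxi
        rw [if_neg hj] at hxj
        exact (hE's _ hxj).2 hxi.2
      · by_cases h' : j = 0
        · rw [if_neg h] at hxi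
          rw [if_pos h'] at hxj
          exact (hE's _ hxi).2 hxj.2
        · rw [if_neg h] at hxi
          rw [if_neg h'] at hxj
          exact hE'd (i-1) (j-1) (by omega) x hxi hxj

end LYE



namespace LYE
variable {p : ℝ} {v : ℝ → ℝ}

lemma lintegral_shift_Ici (F : ℝ → ℝ≥0∞) {u : ℝ} (hu : 0 ≤ u) :
    ∫⁻ ζ in Set.Ici (0:ℝ), F (ζ + u) = ∫⁻ y in Set.Ici u, F y := by
  rw [← lintegral_indicator measurableSet_Ici, ← lintegral_indicator measurableSet_Ici]
  rw [← lintegral_shift (Set.Ici u |>.indicator F) u]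
  congr 1
  ext x
  by_cases hx : (0:ℝ) ≤ x
  · rw [Set.indicator_of_mem (Set.mem_Ici.mpr hx),
      Set.indicator_of_mem (Set.mem_Ici.mpr (by linarith : u ≤ x + u))]
  · rw [Set.indicator_of_notMem (by simpa using hx),
      Set.indicator_of_notMem (by simp only [Set.mem_Ici]; intro h; exact hx (by linarith))]

/-- The core per-scale construction. -/
lemma main_scale (hp : 0 < p) (hv : AdmissibleWeight v) {h : ℝ → ℝ} (hh : MemLpW p v h)
    {c0 : ℝ} (hc0 : 0 < c0)
    (hbig : ∀ T : ℝ, ∃ b, T ≤ b ∧ c0 ≤ lpNorm p v (translateW b h))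
    (hsmall : ∀ δ, 0 < δ → ∃ a, 0 ≤ a ∧ lpNorm p v (translateW a h) < δ)
    {η : ℝ} (hη : 0 < η) (T : ℝ) :
    ∃ u : ℝ, 1 ≤ u ∧ T ≤ u ∧ ∀ N : ℕ, ∃ x : ℕ → ℝ → ℝ,
      (∀ i, i < N → MemLpW p v (x i)) ∧
      (∀ i j, i < N → j < N → i ≠ j → ∀ ξ, x i ξ ≠ 0 → x j ξ = 0) ∧
      (∀ i, i < N → lpNorm p v (x i) ≤ η) ∧
      (∀ i, i < N → ∃ ξ, x i ξ ≠ 0) ∧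
      (∀ i, i < N → 2 ≤ lpNorm p v (translateW u (x i))) := by
  classical
  -- constants
  set Kr : ℝ := (2/η) ^ p with hKr_def
  have hKr_pos : 0 < Kr := Real.rpow_pos_of_pos (by positivity) _
  have hc0p_pos : 0 < c0 ^ p := Real.rpow_pos_of_pos hc0 _
  set δ : ℝ := (c0 ^ p / (4 * Kr)) ^ (1/p) with hδ_def
  have hδ_pos : 0 < δ := Real.rpow_pos_of_pos (by positivity) _
  have hδp : δ ^ p = c0 ^ p / (4 * Kr) := by
    rw [hδ_def, ← Real.rpow_mul (by positivity)]
    rw [one_div, inv_mul_cancel₀ hp.ne', Real.rpow_one]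
  -- quiet and big times
  obtain ⟨a, ha0, hasmall⟩ := hsmall δ hδ_pos
  obtain ⟨b, hb_ge, hbbig⟩ := hbig (a + max 1 T)
  set u : ℝ := b - a with hu_def
  have hu1 : 1 ≤ u := by
    have := le_max_left 1 T
    simp only [hu_def]; linarith
  have huT : T ≤ u := by
    have := le_max_right 1 T
    simp only [hu_def]; linarith
  have hu0 : 0 ≤ u := by linarith
  have hb0 : 0 ≤ b := by have := le_max_left 1 T; linarith
  have hab : b = a + u := by simp [hu_def]
  refine ⟨u, hu1, huT, ?_⟩
  intro N
  -- measurable representative of v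
  set w' : ℝ → ℝ := (aesm_v hv).mk v with hw'_def
  have hw'_meas : StronglyMeasurable w' := (aesm_v hv).stronglyMeasurable_mk
  have hvw : v =ᵐ[volume.restrict (Set.Ici (0:ℝ))] w' := (aesm_v hv).ae_eq_mk
  set meas0 : Measure ℝ := volume.restrict (Set.Ici (0:ℝ)) with hmeas0
  set φ : ℝ → ℝ := fun ζ => |h (ζ + b)| ^ p with hφ_def
  set g1 : ℝ → ℝ≥0∞ := fun ζ => ENNReal.ofReal (φ ζ * w' ζ) with hg1_def
  set g2 : ℝ → ℝ≥0∞ := fun ζ => ENNReal.ofReal (φ ζ * w' (ζ + u)) with hg2_def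
  set m : Measure ℝ := meas0.withDensity g1 with hm_def
  -- facts
  have hel_eq : ∫⁻ ζ, g1 ζ ∂meas0 = el p v (translateW b h) := by
    rw [hmeas0]
    unfold el
    refine lintegral_congr_ae ?_
    filter_upwards [hvw] with ζ hζ
    rw [hg1_def]
    simp only [hφ_def, translateW]
    rw [hζ]
  have hrpow_cancel : ∀ X : ℝ, 0 ≤ X → (X ^ (1/p)) ^ p = X := by
    intro X hX
    rw [← Real.rpow_mul hX, one_div, inv_mul_cancel₀ hp.ne', Real.rpow_one]
  have hnu_total : ENNReal.ofReal (c0 ^ p) ≤ ∫⁻ ζ, g1 ζ ∂meas0 := by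
    rw [hel_eq]
    have h1 : c0 ^ p ≤ (el p v (translateW b h)).toReal := by
      have h2 : c0 ≤ (el p v (translateW b h)).toReal ^ (1/p) := by
        rw [← lpNorm_eq hp hv (aesm_translate hh.1 hb0)]
        exact hbbig
      calc c0 ^ p ≤ ((el p v (translateW b h)).toReal ^ (1/p)) ^ p :=
            Real.rpow_le_rpow hc0.le h2 hp.le
      _ = (el p v (translateW b h)).toReal := hrpow_cancel _ ENNReal.toReal_nonneg
    calc ENNReal.ofReal (c0 ^ p) ≤ ENNReal.ofReal (el p v (translateW b h)).toReal :=
          ENNReal.ofReal_le_ofReal h1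
    _ ≤ el p v (translateW b h) := ENNReal.ofReal_toReal_le
  have hνfin : (∫⁻ ζ, g1 ζ ∂meas0) < ⊤ := by
    rw [hel_eq]
    exact el_translate_lt_top hp hv hh hb0
  have hμtot : (∫⁻ ζ, g2 ζ ∂meas0) ≤ ENNReal.ofReal (δ ^ p) := by
    set Ψ : ℝ → ℝ≥0∞ := fun y => ENNReal.ofReal (|h (y + a)| ^ p * w' y) with hΨ_def
    have hpt : ∀ ζ, g2 ζ = Ψ (ζ + u) := by
      intro ζ
      rw [hg2_def, hΨ_def]
      simp only [hφ_def]
      congr 3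
      rw [hab]; ring
    have step1 : (∫⁻ ζ, g2 ζ ∂meas0) = ∫⁻ y in Set.Ici u, Ψ y := by
      rw [hmeas0]
      calc (∫⁻ ζ in Set.Ici (0:ℝ), g2 ζ) = ∫⁻ ζ in Set.Ici (0:ℝ), Ψ (ζ + u) :=
            lintegral_congr hpt
      _ = ∫⁻ y in Set.Ici u, Ψ y := lintegral_shift_Ici Ψ hu0
    have step2 : (∫⁻ y in Set.Ici u, Ψ y) ≤ ∫⁻ y in Set.Ici (0:ℝ), Ψ y :=
      lintegral_mono' (Measure.restrict_mono (Set.Ici_subset_Ici.mpr hu0) le_rfl) le_rfl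
    have step3 : (∫⁻ y in Set.Ici (0:ℝ), Ψ y) = el p v (translateW a h) := by
      unfold el
      refine lintegral_congr_ae ?_
      filter_upwards [hvw] with ζ hζ
      rw [hΨ_def]
      simp only [translateW]
      rw [hζ]
    have step4 : el p v (translateW a h) ≤ ENNReal.ofReal (δ ^ p) := by
      have hfin := el_translate_lt_top hp hv hh ha0
      have h2 : (el p v (translateW a h)).toReal ^ (1/p) < δ := by
        rw [← lpNorm_eq hp hv (aesm_translate hh.1 ha0)]
        exact hasmall
      have h1 : (el p v (translateW a h)).toReal ≤ δ ^ p := by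
        calc (el p v (translateW a h)).toReal
            = ((el p v (translateW a h)).toReal ^ (1/p)) ^ p :=
              (hrpow_cancel _ ENNReal.toReal_nonneg).symm
        _ ≤ δ ^ p := Real.rpow_le_rpow (Real.rpow_nonneg ENNReal.toReal_nonneg _) h2.le hp.le
      calc el p v (translateW a h) = ENNReal.ofReal (el p v (translateW a h)).toReal :=
            (ENNReal.ofReal_toReal hfin.ne).symm
      _ ≤ ENNReal.ofReal (δ ^ p) := ENNReal.ofReal_le_ofReal h1
    calc (∫⁻ ζ, g2 ζ ∂meas0) = ∫⁻ y in Set.Ici u, Ψ y := step1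
    _ ≤ ∫⁻ y in Set.Ici (0:ℝ), Ψ y := step2
    _ = el p v (translateW a h) := step3
    _ ≤ ENNReal.ofReal (δ ^ p) := step4
  have hatom : ∀ r : ℝ, m {r} = 0 := by
    intro r
    rw [hm_def, withDensity_apply _ (measurableSet_singleton r)]
    refine setLIntegral_measure_zero _ _ ?_
    rw [hmeas0, Measure.restrict_apply (measurableSet_singleton r)]
    refine measure_mono_null Set.inter_subset_left ?_
    exact Real.volume_singleton
  set G : Set ℝ := {ζ | Kr * w' (ζ + u) ≤ w' ζ} ∩ Set.Ici (0:ℝ) with hG_def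
  have hG_meas : MeasurableSet G := by
    refine MeasurableSet.inter ?_ measurableSet_Ici
    exact measurableSet_le ((hw'_meas.measurable.comp (measurable_add_const u)).const_mul Kr)
      hw'_meas.measurable
  have hmGc : (∫⁻ ζ in Gᶜ, g1 ζ ∂meas0) ≤ ENNReal.ofReal (c0 ^ p / 4) := by
    have hpt : ∀ᵐ ζ ∂(meas0.restrict Gᶜ), g1 ζ ≤ ENNReal.ofReal Kr * g2 ζ := by
      rw [hmeas0, Measure.restrict_restrict hG_meas.compl]
      filter_upwards [ae_restrict_mem (hG_meas.compl.inter measurableSet_Ici)] with ζ hζ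
      obtain ⟨hζG, hζ0⟩ := hζ
      have hlt : w' ζ < Kr * w' (ζ + u) := by
        by_contra hcon
        exact hζG ⟨not_lt.mp hcon, hζ0⟩
      have hφnn : 0 ≤ φ ζ := Real.rpow_nonneg (abs_nonneg _) _
      calc g1 ζ = ENNReal.ofReal (φ ζ * w' ζ) := rfl
      _ ≤ ENNReal.ofReal (Kr * (φ ζ * w' (ζ + u))) := by
          refine ENNReal.ofReal_le_ofReal ?_
          calc φ ζ * w' ζ ≤ φ ζ * (Kr * w' (ζ + u)) :=
                mul_le_mul_of_nonneg_left hlt.le hφnn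
          _ = Kr * (φ ζ * w' (ζ + u)) := by ring
      _ = ENNReal.ofReal Kr * g2 ζ := ENNReal.ofReal_mul hKr_pos.le
    calc (∫⁻ ζ in Gᶜ, g1 ζ ∂meas0) ≤ ∫⁻ ζ in Gᶜ, ENNReal.ofReal Kr * g2 ζ ∂meas0 :=
          lintegral_mono_ae hpt
    _ = ENNReal.ofReal Kr * ∫⁻ ζ in Gᶜ, g2 ζ ∂meas0 :=
          lintegral_const_mul' _ _ ENNReal.ofReal_ne_top
    _ ≤ ENNReal.ofReal Kr * ∫⁻ ζ, g2 ζ ∂meas0 := by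
          refine mul_le_mul_right ?_ _
          exact setLIntegral_le_lintegral _ _
    _ ≤ ENNReal.ofReal Kr * ENNReal.ofReal (δ ^ p) := mul_le_mul_right hμtot _
    _ = ENNReal.ofReal (Kr * δ ^ p) := (ENNReal.ofReal_mul hKr_pos.le).symm
    _ = ENNReal.ofReal (c0 ^ p / 4) := by
          rw [hδp]
          congr 1
          field_simp
  have hmG_pos : 0 < m G := by
    rw [hm_def, withDensity_apply _ hG_meas]
    by_contra hcon
    push_neg at hcon
    have hzero : (∫⁻ ζ in G, g1 ζ ∂meas0) = 0 := le_antisymm hcon zero_le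
    have hsplit : (∫⁻ ζ, g1 ζ ∂meas0)
        = (∫⁻ ζ in G, g1 ζ ∂meas0) + ∫⁻ ζ in Gᶜ, g1 ζ ∂meas0 :=
      (lintegral_add_compl g1 hG_meas).symm
    have : ENNReal.ofReal (c0 ^ p) ≤ ENNReal.ofReal (c0 ^ p / 4) := by
      calc ENNReal.ofReal (c0 ^ p) ≤ ∫⁻ ζ, g1 ζ ∂meas0 := hnu_total
      _ = (∫⁻ ζ in G, g1 ζ ∂meas0) + ∫⁻ ζ in Gᶜ, g1 ζ ∂meas0 := hsplit
      _ = ∫⁻ ζ in Gᶜ, g1 ζ ∂meas0 := by rw [hzero, zero_add]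
      _ ≤ ENNReal.ofReal (c0 ^ p / 4) := hmGc
    rw [ENNReal.ofReal_le_ofReal_iff (by positivity)] at this
    linarith
  obtain ⟨E, hE_meas, hE_sub, hE_pos, hE_disj⟩ := exists_slices m hatom N G hG_meas hmG_pos
  have hE_fin : ∀ i, m (E i) < ⊤ := by
    intro i
    calc m (E i) ≤ m Set.univ := measure_mono (Set.subset_univ _)
    _ = ∫⁻ ζ, g1 ζ ∂meas0 := by
        rw [hm_def, withDensity_apply _ MeasurableSet.univ, Measure.restrict_univ]
    _ < ⊤ := hνfin
  set C : ℕ → ℝ := fun i => 2 / ((m (E i)).toReal) ^ (1/p) with hC_def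
  have htR_pos : ∀ i, i < N → 0 < ((m (E i)).toReal) ^ (1/p) := by
    intro i hi
    have := ENNReal.toReal_pos (hE_pos i hi).ne' (hE_fin i).ne
    positivity
  have hC_pos : ∀ i < N, 0 < C i := by
    intro i hi
    rw [hC_def]
    have := htR_pos i hi
    positivity
  set x : ℕ → ℝ → ℝ := fun i =>
    Set.indicator ((fun ξ => ξ - u) ⁻¹' (E i)) (fun ξ => C i * h (ξ + a)) with hx_def
  have hEsub0 : ∀ i, E i ⊆ Set.Ici (0:ℝ) := fun i => (hE_sub i).trans Set.inter_subset_right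
  -- main value computations
  have hxT : ∀ i, translateW u (x i) = Set.indicator (E i) (fun ζ => C i * h (ζ + b)) := by
    intro i
    funext ξ
    simp only [translateW, hx_def]
    by_cases hmem : ξ ∈ E i
    · rw [Set.indicator_of_mem (show ξ + u ∈ (fun ξ => ξ - u) ⁻¹' (E i) by
        simpa [add_sub_cancel_right] using hmem), Set.indicator_of_mem hmem]
      congr 2
      rw [hab]; ring
    · rw [Set.indicator_of_notMem (show ξ + u ∉ (fun ξ => ξ - u) ⁻¹' (E i) by
        simpa [add_sub_cancel_right] using hmem), Set.indicator_of_notMem hmem]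
  have hcongr_w : ∀ i, (∫⁻ ζ in E i, ENNReal.ofReal (φ ζ * v ζ) ∂meas0)
      = ∫⁻ ζ in E i, g1 ζ ∂meas0 := by
    intro i
    refine lintegral_congr_ae ?_
    filter_upwards [hvw.filter_mono (ae_mono Measure.restrict_le_self)] with ζ hζ
    rw [hg1_def, hζ]
  have claimB : ∀ i < N, el p v (translateW u (x i))
      = ENNReal.ofReal ((C i) ^ p) * m (E i) := by
    intro i hi
    have hCnn : (0:ℝ) ≤ C i := (hC_pos i hi).le
    have hCpnn : (0:ℝ) ≤ (C i) ^ p := Real.rpow_nonneg hCnn _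
    rw [hxT i]
    unfold el
    have hpt : ∀ ξ : ℝ,
        ENNReal.ofReal (|Set.indicator (E i) (fun ζ => C i * h (ζ + b)) ξ| ^ p * v ξ)
        = Set.indicator (E i) (fun ζ => ENNReal.ofReal ((C i) ^ p * (φ ζ * v ζ))) ξ := by
      intro ξ
      by_cases hmem : ξ ∈ E i
      · rw [Set.indicator_of_mem hmem, Set.indicator_of_mem hmem]
        congr 1
        rw [abs_mul, Real.mul_rpow (abs_nonneg _) (abs_nonneg _), abs_of_nonneg hCnn]
        simp only [hφ_def]
        ring
      · rw [Set.indicator_of_notMem hmem, Set.indicator_of_notMem hmem]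
        rw [abs_zero, Real.zero_rpow hp.ne', zero_mul, ENNReal.ofReal_zero]
    calc (∫⁻ ξ in Set.Ici (0:ℝ),
          ENNReal.ofReal (|Set.indicator (E i) (fun ζ => C i * h (ζ + b)) ξ| ^ p * v ξ))
        = ∫⁻ ξ, Set.indicator (E i)
            (fun ζ => ENNReal.ofReal ((C i) ^ p * (φ ζ * v ζ))) ξ ∂meas0 := by
          rw [hmeas0]
          exact lintegral_congr hpt
    _ = ∫⁻ ζ in E i, ENNReal.ofReal ((C i) ^ p * (φ ζ * v ζ)) ∂meas0 :=
          lintegral_indicator (hE_meas i) _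
    _ = ∫⁻ ζ in E i, ENNReal.ofReal ((C i) ^ p) * ENNReal.ofReal (φ ζ * v ζ) ∂meas0 := by
          refine lintegral_congr fun ζ => ?_
          exact ENNReal.ofReal_mul hCpnn
    _ = ENNReal.ofReal ((C i) ^ p) * ∫⁻ ζ in E i, ENNReal.ofReal (φ ζ * v ζ) ∂meas0 :=
          lintegral_const_mul' _ _ ENNReal.ofReal_ne_top
    _ = ENNReal.ofReal ((C i) ^ p) * m (E i) := by
          rw [hcongr_w i, hm_def, withDensity_apply _ (hE_meas i)]
  have hKrq : ((η:ℝ)/2) ^ p * Kr = 1 := by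
    rw [hKr_def, ← Real.mul_rpow (by positivity) (by positivity)]
    rw [show (η/2) * (2/η) = 1 by field_simp]
    exact Real.one_rpow _
  have claimA : ∀ i < N, el p v (x i)
      ≤ ENNReal.ofReal ((C i) ^ p) * (ENNReal.ofReal ((η/2) ^ p) * m (E i)) := by
    intro i hi
    have hCnn : (0:ℝ) ≤ C i := (hC_pos i hi).le
    have hCpnn : (0:ℝ) ≤ (C i) ^ p := Real.rpow_nonneg hCnn _
    set preE : Set ℝ := (fun ξ => ξ - u) ⁻¹' (E i) with hpreE_def
    have hpreE_meas : MeasurableSet preE := (measurable_sub_const u) (hE_meas i)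
    set F : ℝ → ℝ≥0∞ := fun ξ => ENNReal.ofReal ((C i) ^ p * (φ (ξ - u) * v ξ)) with hF_def
    have hpt : ∀ ξ : ℝ, ENNReal.ofReal (|x i ξ| ^ p * v ξ) = Set.indicator preE F ξ := by
      intro ξ
      by_cases hmem : ξ ∈ preE
      · rw [Set.indicator_of_mem hmem]
        have hval : x i ξ = C i * h (ξ + a) := by
          simp only [hx_def]
          rw [Set.indicator_of_mem hmem]
        rw [hval, hF_def]
        congr 1
        rw [abs_mul, Real.mul_rpow (abs_nonneg _) (abs_nonneg _), abs_of_nonneg hCnn]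
        simp only [hφ_def]
        have : ξ - u + b = ξ + a := by rw [hab]; ring
        rw [this]
        ring
      · rw [Set.indicator_of_notMem hmem]
        have hval : x i ξ = 0 := by
          simp only [hx_def]
          rw [Set.indicator_of_notMem hmem]
        rw [hval, abs_zero, Real.zero_rpow hp.ne', zero_mul, ENNReal.ofReal_zero]
    have hpreE_sub : preE ⊆ Set.Ici (0:ℝ) := by
      intro ξ hξ
      have h1 : ξ - u ∈ E i := hξ
      have h2 : (0:ℝ) ≤ ξ - u := hEsub0 i h1
      simp only [Set.mem_Ici]
      linarith
    have hstep1 : el p v (x i) = ∫⁻ ξ, Set.indicator preE F ξ ∂volume := by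
      unfold el
      calc (∫⁻ ξ in Set.Ici (0:ℝ), ENNReal.ofReal (|x i ξ| ^ p * v ξ))
          = ∫⁻ ξ in Set.Ici (0:ℝ), Set.indicator preE F ξ := lintegral_congr hpt
      _ = ∫⁻ ξ, Set.indicator (Set.Ici (0:ℝ)) (Set.indicator preE F) ξ ∂volume :=
            (lintegral_indicator measurableSet_Ici _).symm
      _ = ∫⁻ ξ, Set.indicator preE F ξ ∂volume := by
            refine lintegral_congr fun ξ => ?_
            by_cases hmem : ξ ∈ preE
            · rw [Set.indicator_of_mem (hpreE_sub hmem), Set.indicator_of_mem hmem]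
            · rw [Set.indicator_of_notMem hmem]
              by_cases h0 : ξ ∈ Set.Ici (0:ℝ)
              · rw [Set.indicator_of_mem h0, Set.indicator_of_notMem hmem]
              · rw [Set.indicator_of_notMem h0]
    have hstep2 : (∫⁻ ξ, Set.indicator preE F ξ ∂volume)
        = ∫⁻ ζ in E i, F (ζ + u) ∂meas0 := by
      calc (∫⁻ ξ, Set.indicator preE F ξ ∂volume)
          = ∫⁻ ζ, Set.indicator preE F (ζ + u) ∂volume := (lintegral_shift _ u).symm
      _ = ∫⁻ ζ, Set.indicator (E i) (fun ζ => F (ζ + u)) ζ ∂volume := by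
            refine lintegral_congr fun ζ => ?_
            by_cases hmem : ζ ∈ E i
            · rw [Set.indicator_of_mem (show ζ + u ∈ preE by
                simpa [hpreE_def, add_sub_cancel_right] using hmem),
                Set.indicator_of_mem hmem]
            · rw [Set.indicator_of_notMem (show ζ + u ∉ preE by
                simpa [hpreE_def, add_sub_cancel_right] using hmem),
                Set.indicator_of_notMem hmem]
      _ = ∫⁻ ζ in E i, F (ζ + u) ∂volume := lintegral_indicator (hE_meas i) _
      _ = ∫⁻ ζ in E i, F (ζ + u) ∂meas0 := by
            rw [hmeas0, Measure.restrict_restrict (hE_meas i),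
              Set.inter_eq_self_of_subset_left (hEsub0 i)]
    have hstep3 : (∫⁻ ζ in E i, F (ζ + u) ∂meas0)
        = ENNReal.ofReal ((C i) ^ p) * ∫⁻ ζ in E i, ENNReal.ofReal (φ ζ * v (ζ + u)) ∂meas0 := by
      calc (∫⁻ ζ in E i, F (ζ + u) ∂meas0)
          = ∫⁻ ζ in E i, ENNReal.ofReal ((C i) ^ p)
              * ENNReal.ofReal (φ ζ * v (ζ + u)) ∂meas0 := by
            refine lintegral_congr fun ζ => ?_
            rw [hF_def]
            simp only [add_sub_cancel_right]
            exact ENNReal.ofReal_mul hCpnn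
      _ = ENNReal.ofReal ((C i) ^ p) * ∫⁻ ζ in E i, ENNReal.ofReal (φ ζ * v (ζ + u)) ∂meas0 :=
            lintegral_const_mul' _ _ ENNReal.ofReal_ne_top
    have hstep4 : (∫⁻ ζ in E i, ENNReal.ofReal (φ ζ * v (ζ + u)) ∂meas0)
        = ∫⁻ ζ in E i, g2 ζ ∂meas0 := by
      refine lintegral_congr_ae ?_
      have hz := ae_translate hvw hu0
      rw [← hmeas0] at hz
      filter_upwards [hz.filter_mono (ae_mono Measure.restrict_le_self)] with ζ hζ
      rw [hg2_def]
      rw [show v (ζ + u) = w' (ζ + u) from hζ]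
    have hstep5 : (∫⁻ ζ in E i, g2 ζ ∂meas0)
        ≤ ENNReal.ofReal ((η/2) ^ p) * m (E i) := by
      have hpt2 : ∀ᵐ ζ ∂(meas0.restrict (E i)), g2 ζ ≤ ENNReal.ofReal ((η/2) ^ p) * g1 ζ := by
        rw [hmeas0, Measure.restrict_restrict (hE_meas i)]
        filter_upwards [ae_restrict_mem ((hE_meas i).inter measurableSet_Ici)] with ζ hζ
        have hζG : ζ ∈ G := hE_sub i hζ.1
        have hratio : Kr * w' (ζ + u) ≤ w' ζ := hζG.1
        have hφnn : 0 ≤ φ ζ := Real.rpow_nonneg (abs_nonneg _) _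
        have hq : w' (ζ + u) ≤ (η/2) ^ p * w' ζ := by
          have h1 : (η/2) ^ p * (Kr * w' (ζ + u)) ≤ (η/2) ^ p * w' ζ :=
            mul_le_mul_of_nonneg_left hratio (by positivity)
          calc w' (ζ + u) = ((η/2) ^ p * Kr) * w' (ζ + u) := by rw [hKrq, one_mul]
          _ = (η/2) ^ p * (Kr * w' (ζ + u)) := by ring
          _ ≤ (η/2) ^ p * w' ζ := h1
        calc g2 ζ = ENNReal.ofReal (φ ζ * w' (ζ + u)) := rfl
        _ ≤ ENNReal.ofReal ((η/2) ^ p * (φ ζ * w' ζ)) := by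
            refine ENNReal.ofReal_le_ofReal ?_
            calc φ ζ * w' (ζ + u) ≤ φ ζ * ((η/2) ^ p * w' ζ) :=
                  mul_le_mul_of_nonneg_left hq hφnn
            _ = (η/2) ^ p * (φ ζ * w' ζ) := by ring
        _ = ENNReal.ofReal ((η/2) ^ p) * g1 ζ := ENNReal.ofReal_mul (by positivity)
      calc (∫⁻ ζ in E i, g2 ζ ∂meas0)
          ≤ ∫⁻ ζ in E i, ENNReal.ofReal ((η/2) ^ p) * g1 ζ ∂meas0 := lintegral_mono_ae hpt2
      _ = ENNReal.ofReal ((η/2) ^ p) * ∫⁻ ζ in E i, g1 ζ ∂meas0 :=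
            lintegral_const_mul' _ _ ENNReal.ofReal_ne_top
      _ = ENNReal.ofReal ((η/2) ^ p) * m (E i) := by
            rw [hm_def, withDensity_apply _ (hE_meas i)]
    calc el p v (x i) = ∫⁻ ξ, Set.indicator preE F ξ ∂volume := hstep1
    _ = ∫⁻ ζ in E i, F (ζ + u) ∂meas0 := hstep2
    _ = ENNReal.ofReal ((C i) ^ p) * ∫⁻ ζ in E i, ENNReal.ofReal (φ ζ * v (ζ + u)) ∂meas0 :=
          hstep3
    _ = ENNReal.ofReal ((C i) ^ p) * ∫⁻ ζ in E i, g2 ζ ∂meas0 := by rw [hstep4]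
    _ ≤ ENNReal.ofReal ((C i) ^ p) * (ENNReal.ofReal ((η/2) ^ p) * m (E i)) :=
          mul_le_mul_right hstep5 _
  have haesm_x : ∀ i, AEStronglyMeasurable (x i) (volume.restrict (Set.Ici (0:ℝ))) := by
    intro i
    apply AEStronglyMeasurable.indicator
    · exact (aesm_translate hh.1 ha0).const_mul _
    · exact (measurable_sub_const u) (hE_meas i)
  have hel_x_fin : ∀ i < N, el p v (x i) < ⊤ := by
    intro i hi
    refine lt_of_le_of_lt (claimA i hi) ?_
    exact ENNReal.mul_lt_top ENNReal.ofReal_lt_top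
      (ENNReal.mul_lt_top ENNReal.ofReal_lt_top (hE_fin i))
  refine ⟨x, ?_, ?_, ?_, ?_, ?_⟩
  · -- MemLpW
    intro i hi
    exact memLpW_of hp hv (haesm_x i) (hel_x_fin i hi)
  · -- disjoint supports
    intro i j _ _ hij ξ hξ
    have hmem : ξ ∈ (fun ξ => ξ - u) ⁻¹' (E i) := by
      by_contra hc
      exact hξ (Set.indicator_of_notMem hc _)
    have hnot : ξ ∉ (fun ξ => ξ - u) ⁻¹' (E j) := fun hc => hE_disj i j hij _ hmem hc
    exact Set.indicator_of_notMem hnot _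
  · -- norm small
    intro i hi
    have hCnn : (0:ℝ) ≤ C i := (hC_pos i hi).le
    have hCpnn : (0:ℝ) ≤ (C i) ^ p := Real.rpow_nonneg hCnn _
    have hpow_pow : ∀ Y : ℝ, 0 ≤ Y → (Y ^ p) ^ (1/p) = Y := by
      intro Y hY
      rw [← Real.rpow_mul hY, mul_one_div, div_self hp.ne', Real.rpow_one]
    have hfinR : ENNReal.ofReal ((C i) ^ p) * (ENNReal.ofReal ((η/2) ^ p) * m (E i)) ≠ ⊤ := by
      exact (ENNReal.mul_lt_top ENNReal.ofReal_lt_top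
        (ENNReal.mul_lt_top ENNReal.ofReal_lt_top (hE_fin i))).ne
    rw [lpNorm_eq hp hv (haesm_x i)]
    have h1 : (el p v (x i)).toReal ≤ (C i) ^ p * ((η/2) ^ p * (m (E i)).toReal) := by
      have h2 := ENNReal.toReal_mono hfinR (claimA i hi)
      rwa [ENNReal.toReal_mul, ENNReal.toReal_mul, ENNReal.toReal_ofReal hCpnn,
        ENNReal.toReal_ofReal (by positivity)] at h2
    have ht := htR_pos i hi
    calc (el p v (x i)).toReal ^ (1/p)
        ≤ ((C i) ^ p * ((η/2) ^ p * (m (E i)).toReal)) ^ (1/p) :=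
          Real.rpow_le_rpow ENNReal.toReal_nonneg h1 (by positivity)
    _ = ((C i) ^ p) ^ (1/p) * (((η/2) ^ p) ^ (1/p) * ((m (E i)).toReal) ^ (1/p)) := by
          rw [Real.mul_rpow hCpnn (by positivity),
            Real.mul_rpow (by positivity) ENNReal.toReal_nonneg]
    _ = C i * ((η/2) * ((m (E i)).toReal) ^ (1/p)) := by
          rw [hpow_pow (C i) hCnn, hpow_pow (η/2) (by positivity)]
    _ = η := by
          rw [hC_def]
          field_simp
  · -- nonzero
    intro i hi
    have hne : ¬ ∀ ζ ∈ E i, g1 ζ = 0 := by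
      intro hall
      have hz : m (E i) = 0 := by
        rw [hm_def, withDensity_apply _ (hE_meas i)]
        have hae : ∀ᵐ ζ ∂(meas0.restrict (E i)), g1 ζ = 0 := by
          rw [hmeas0, Measure.restrict_restrict (hE_meas i)]
          filter_upwards [ae_restrict_mem ((hE_meas i).inter measurableSet_Ici)] with ζ hζ
          exact hall ζ hζ.1
        calc (∫⁻ ζ in E i, g1 ζ ∂meas0) = ∫⁻ _ in E i, 0 ∂meas0 := lintegral_congr_ae hae
        _ = 0 := lintegral_zero
      exact (hE_pos i hi).ne' hz
    push_neg at hne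
    obtain ⟨ζ, hζE, hζne⟩ := hne
    have hpos : 0 < φ ζ * w' ζ := by
      by_contra hc
      exact hζne (by rw [hg1_def]; exact ENNReal.ofReal_eq_zero.mpr (not_lt.mp hc))
    have hφne : φ ζ ≠ 0 := by
      intro h0
      rw [h0, zero_mul] at hpos
      exact lt_irrefl 0 hpos
    have hhb : h (ζ + b) ≠ 0 := by
      intro h0
      refine hφne ?_
      simp only [hφ_def]
      rw [h0, abs_zero, Real.zero_rpow hp.ne']
    refine ⟨ζ + u, ?_⟩
    have hmem : ζ + u ∈ (fun ξ => ξ - u) ⁻¹' (E i) := by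
      simpa [add_sub_cancel_right] using hζE
    simp only [hx_def]
    rw [Set.indicator_of_mem hmem]
    rw [show ζ + u + a = ζ + b by rw [hab]; ring]
    exact mul_ne_zero (hC_pos i hi).ne' hhb
  · -- gain
    intro i hi
    have hCnn : (0:ℝ) ≤ C i := (hC_pos i hi).le
    have hCpnn : (0:ℝ) ≤ (C i) ^ p := Real.rpow_nonneg hCnn _
    have hpow_pow : ∀ Y : ℝ, 0 ≤ Y → (Y ^ p) ^ (1/p) = Y := by
      intro Y hY
      rw [← Real.rpow_mul hY, mul_one_div, div_self hp.ne', Real.rpow_one]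
    rw [lpNorm_eq hp hv (aesm_translate (haesm_x i) hu0), claimB i hi]
    have ht := htR_pos i hi
    have heq : ((ENNReal.ofReal ((C i) ^ p) * m (E i)).toReal) ^ (1/p) = 2 := by
      rw [ENNReal.toReal_mul, ENNReal.toReal_ofReal hCpnn,
        Real.mul_rpow hCpnn ENNReal.toReal_nonneg, hpow_pow (C i) hCnn, hC_def]
      exact div_mul_cancel₀ 2 ht.ne'
    rw [heq]

end LYE

namespace LYE

variable {p : ℝ} {v : ℝ → ℝ}

lemma memLpW_zero (hp : 0 < p) : MemLpW p v (0 : ℝ → ℝ) := by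
  constructor
  · exact aestronglyMeasurable_const
  · have : (fun x => |(0:ℝ→ℝ) x| ^ p * v x) = fun _ => (0:ℝ) := by
      funext x
      simp [Real.zero_rpow hp.ne']
    rw [this]
    exact integrableOn_zero

lemma eq_top_of_forall_coe_le (x : EReal) (hx : ∀ L : ℝ, (L : EReal) ≤ x) : x = ⊤ := by
  induction x with
  | bot =>
    exfalso
    have := hx 0
    simp at this
  | coe r =>
    exfalso
    have := hx (r + 1)
    rw [EReal.coe_le_coe_iff] at this
    linarith
  | top => rfl

lemma le_limsup_of_frequently' (F : ℝ → EReal) (L : EReal)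
    (hfr : ∃ᶠ t in Filter.atTop, L ≤ F t) : L ≤ Filter.limsup F Filter.atTop := by
  rw [Filter.limsup_eq]
  refine le_sInf ?_
  intro a ha
  obtain ⟨t, h1, h2⟩ := (ha.and_frequently hfr).exists
  exact h2.trans h1

end LYE


open LYE in
theorem lp_infinite_entropy_of_liYorke_pair
    (p : ℝ) (hp : 0 < p) (v : ℝ → ℝ) (hv : AdmissibleWeight v)
    (hLY : ∃ f g, MemLpW p v f ∧ MemLpW p v g ∧
      (∀ ε > (0:ℝ), ∃ᶠ t in Filter.atTop,
        lpNorm p v (translateW t f - translateW t g) < ε) ∧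
      (∃ c > (0:ℝ), ∃ᶠ t in Filter.atTop,
        c ≤ lpNorm p v (translateW t f - translateW t g))) :
    entropyFam (fun f g => lpNorm p v (f - g)) translateW {f | MemLpW p v f} = ⊤ := by
  classical
  obtain ⟨f, g, hf, hg, hsmall0, c0, hc0, hbig0⟩ := hLY
  set h : ℝ → ℝ := f - g with hh_def
  have hhmem : MemLpW p v h := memLpW_sub hp hv hf hg
  have htrans_eq : ∀ t : ℝ, translateW t f - translateW t g = translateW t h := fun t => rfl
  have hbig : ∀ T : ℝ, ∃ b, T ≤ b ∧ c0 ≤ lpNorm p v (translateW b h) := by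
    intro T
    obtain ⟨b, hb1, hb2⟩ := Filter.frequently_atTop.mp hbig0 T
    exact ⟨b, hb1, by rwa [htrans_eq] at hb2⟩
  have hsmall : ∀ δ, 0 < δ → ∃ a, 0 ≤ a ∧ lpNorm p v (translateW a h) < δ := by
    intro δ hδ
    obtain ⟨a, ha1, ha2⟩ := Filter.frequently_atTop.mp (hsmall0 δ hδ) 0
    exact ⟨a, ha1, by rwa [htrans_eq] at ha2⟩
  have hscale := fun j : ℕ => main_scale hp hv hhmem hc0 hbig hsmall
      (show (0:ℝ) < (1/2)^j by positivity) (j : ℝ)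
  choose U hU1 hUj hUx using hscale
  set NN : ℕ → ℕ := fun j => ⌈Real.exp ((j+1) * (U j + 1))⌉₊ with hNN_def
  have hscale2 := fun j : ℕ => hUx j (NN j)
  choose X hXmem hXdisj hXnorm hXnz hXgain using hscale2
  set K : Set (ℝ → ℝ) := {z | z = 0 ∨ ∃ j i, i < NN j ∧ z = X j i} with hK_def
  have hKsub : K ⊆ {f' | MemLpW p v f'} := by
    rintro z (rfl | ⟨j, i, hij, rfl⟩)
    · exact memLpW_zero hp
    · exact hXmem j i hij
  have hKcomp : DSeqCompact (fun f' g' => lpNorm p v (f' - g')) K := by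
    intro s hs
    by_cases hA : ∃ z ∈ K, {n | s n = z}.Infinite
    · obtain ⟨z, hzK, hinf⟩ := hA
      have hinf' : (setOf (fun n => s n = z)).Infinite := hinf
      refine ⟨z, hzK, Nat.nth (fun n => s n = z), Nat.nth_strictMono hinf', ?_⟩
      have hzz : (fun n => lpNorm p v (s (Nat.nth (fun n => s n = z) n) - z)) = fun _ => 0 := by
        funext n
        rw [show s (Nat.nth (fun n => s n = z) n) = z from Nat.nth_mem_of_infinite hinf' n,
          sub_self]
        exact lpNorm_zero hp
      rw [hzz]
      exact tendsto_const_nhds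
    · push_neg at hA
      refine ⟨0, Or.inl rfl, id, strictMono_id, ?_⟩
      rw [Metric.tendsto_atTop]
      intro ε hε
      obtain ⟨mth, hmth⟩ := exists_pow_lt_of_lt_one hε (by norm_num : (1/2 : ℝ) < 1)
      set V : Set (ℝ → ℝ) := {0} ∪ ⋃ j ∈ Set.Iic mth, (fun i => X j i) '' Set.Iio (NN j)
        with hV_def
      have hVfin : V.Finite :=
        (Set.finite_singleton _).union
          ((Set.finite_Iic mth).biUnion fun j _ => (Set.finite_Iio _).image _)
      have hfib : {n | s n ∈ V}.Finite := by
        have hss : {n | s n ∈ V} ⊆ ⋃ z ∈ V, {n | s n = z} := fun n hn => Set.mem_biUnion hn rfl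
        refine Set.Finite.subset (hVfin.biUnion fun z _ => ?_) hss
        by_cases hzK : z ∈ K
        · exact hA z hzK
        · have hempty : {n | s n = z} = ∅ := by
            ext n
            simp only [Set.mem_setOf_eq, Set.mem_empty_iff_false, iff_false]
            intro he
            exact hzK (he ▸ hs n)
          rw [hempty]
          exact Set.finite_empty
      obtain ⟨N0, hN0⟩ := hfib.bddAbove
      refine ⟨N0 + 1, fun n hn => ?_⟩
      have hnot : s n ∉ V := by
        intro hmm
        have := hN0 hmm
        omega
      rcases hs n with h0 | ⟨j, i, hij, hsn⟩
      · exact absurd (Or.inl h0) hnot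
      · have hjm : mth ≤ j := by
          by_contra hle
          push_neg at hle
          refine hnot (Or.inr ?_)
          exact Set.mem_biUnion (Set.mem_Iic.mpr hle.le) ⟨i, Set.mem_Iio.mpr hij, hsn.symm⟩
        have hx := hXnorm j i hij
        have hnn := lpNorm_nonneg hp hv (hXmem j i hij).1
        have hval : s n - (0 : ℝ → ℝ) = X j i := by rw [hsn, sub_zero]
        simp only [id_eq, Real.dist_eq, sub_zero, hval]
        rw [abs_of_nonneg hnn]
        calc lpNorm p v (X j i) ≤ (1/2)^j := hx
        _ ≤ (1/2)^mth := pow_le_pow_of_le_one (by norm_num) (by norm_num) hjm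
        _ < ε := hmth
  have hsep_card : ∀ J : ℕ, (NN J : ℝ≥0∞)
      ≤ maxSep (fun f' g' => lpNorm p v (f' - g')) translateW K (U J) 1 := by
    intro J
    set SJ : Finset (ℝ → ℝ) := (Finset.range (NN J)).image (fun i => X J i) with hSJ_def
    have hinj : Set.InjOn (fun i => X J i) ↑(Finset.range (NN J)) := by
      intro i hi k hk hik
      by_contra hne
      simp only [Finset.coe_range, Set.mem_Iio] at hi hk
      obtain ⟨ξ, hξ⟩ := hXnz J i hi
      have h0 : X J k ξ = 0 := hXdisj J i k hi hk hne ξ hξ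
      simp only at hik
      rw [hik] at hξ
      exact hξ h0
    have hcard : SJ.card = NN J := by
      rw [hSJ_def, Finset.card_image_of_injOn hinj, Finset.card_range]
    have hsub : ↑SJ ⊆ K := by
      intro z hz
      simp only [hSJ_def, Finset.coe_image, Finset.coe_range, Set.mem_image,
        Set.mem_Iio] at hz
      obtain ⟨i, hi, rfl⟩ := hz
      exact Or.inr ⟨J, i, hi, rfl⟩
    have hU0 : (0:ℝ) ≤ U J := le_trans zero_le_one (hU1 J)
    have hsep : IsSepSet (fun f' g' => lpNorm p v (f' - g')) translateW (U J) 1 ↑SJ := by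
      intro z1 h1 z2 h2 hne
      simp only [hSJ_def, Finset.coe_image, Finset.coe_range, Set.mem_image,
        Set.mem_Iio] at h1 h2
      obtain ⟨i, hi, rfl⟩ := h1
      obtain ⟨k, hk, rfl⟩ := h2
      have hik : i ≠ k := fun hc => hne (by rw [hc])
      refine ⟨U J, ⟨hU0, le_rfl⟩, ?_⟩
      have hge := hXgain J i hi
      have hlow := sep_lower hp hv (hXmem J i hi) (hXmem J k hk)
        (fun ξ hξ => hXdisj J i k hi hk hik ξ hξ) hU0
      show (1:ℝ) ≤ lpNorm p v (translateW (U J) (X J i) - translateW (U J) (X J k))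
      calc (1:ℝ) ≤ 2 := one_le_two
      _ ≤ lpNorm p v (translateW (U J) (X J i)) := hge
      _ ≤ lpNorm p v (translateW (U J) (X J i) - translateW (U J) (X J k)) := hlow
    calc (NN J : ℝ≥0∞) = (SJ.card : ℝ≥0∞) := by rw [hcard]
    _ ≤ maxSep (fun f' g' => lpNorm p v (f' - g')) translateW K (U J) 1 :=
        le_iSup₂_of_le SJ ⟨hsub, hsep⟩ le_rfl
  have hfreq : ∀ L : ℝ, ∃ᶠ t in Filter.atTop, (L : EReal) ≤
      ((t⁻¹ : ℝ) : EReal) * elog (maxSep (fun f' g' => lpNorm p v (f' - g')) translateW K t 1) := by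
    intro L
    rw [Filter.frequently_atTop]
    intro T0
    set J : ℕ := max ⌈L⌉₊ ⌈T0⌉₊ with hJ_def
    have hUJ : (0:ℝ) < U J := lt_of_lt_of_le one_pos (hU1 J)
    have hT0 : T0 ≤ U J := by
      calc T0 ≤ (⌈T0⌉₊ : ℝ) := Nat.le_ceil T0
      _ ≤ (J : ℝ) := by exact_mod_cast Nat.cast_le.mpr (le_max_right _ _)
      _ ≤ U J := hUj J
    have hLJ : L ≤ (J : ℝ) + 1 := by
      calc L ≤ (⌈L⌉₊ : ℝ) := Nat.le_ceil L
      _ ≤ (J : ℝ) := by exact_mod_cast Nat.cast_le.mpr (le_max_left _ _)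
      _ ≤ (J : ℝ) + 1 := by linarith
    refine ⟨U J, hT0, ?_⟩
    set Smax := maxSep (fun f' g' => lpNorm p v (f' - g')) translateW K (U J) 1 with hSmax_def
    have hles : (NN J : ℝ≥0∞) ≤ Smax := hsep_card J
    by_cases hStop : Smax = ⊤
    · rw [hStop]
      rw [show elog ⊤ = ⊤ from if_pos rfl]
      rw [EReal.coe_mul_top_of_pos (by positivity)]
      exact le_top
    · have hSR : ((NN J : ℕ) : ℝ) ≤ Smax.toReal := by
        have h2 := ENNReal.toReal_mono hStop hles
        simpa using h2
      have hexp_le : Real.exp (((J:ℝ)+1) * (U J + 1)) ≤ ((NN J : ℕ) : ℝ) := Nat.le_ceil _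
      have hlog : ((J:ℝ)+1) * (U J + 1) ≤ Real.log Smax.toReal := by
        calc ((J:ℝ)+1) * (U J + 1) = Real.log (Real.exp (((J:ℝ)+1) * (U J + 1))) :=
              (Real.log_exp _).symm
        _ ≤ Real.log ((NN J : ℕ) : ℝ) :=
              Real.log_le_log (Real.exp_pos _) hexp_le
        _ ≤ Real.log Smax.toReal :=
              Real.log_le_log (lt_of_lt_of_le (Real.exp_pos _) hexp_le) hSR
      rw [show elog Smax = ((Real.log Smax.toReal : ℝ) : EReal) from if_neg hStop]
      rw [← EReal.coe_mul, EReal.coe_le_coe_iff]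
      have hkey : ((J:ℝ)+1) ≤ (U J)⁻¹ * Real.log Smax.toReal := by
        have h3 : (U J)⁻¹ * (((J:ℝ)+1) * (U J + 1)) ≤ (U J)⁻¹ * Real.log Smax.toReal :=
          mul_le_mul_of_nonneg_left hlog (by positivity)
        refine le_trans ?_ h3
        rw [inv_mul_eq_div, le_div_iff₀ hUJ]
        have hJnn : (0:ℝ) ≤ (J:ℝ) + 1 := by positivity
        nlinarith
      linarith
  have hlimsup : Filter.limsup (fun t : ℝ => ((t⁻¹ : ℝ) : EReal) *
      elog (maxSep (fun f' g' => lpNorm p v (f' - g')) translateW K t 1)) Filter.atTop = ⊤ := by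
    refine eq_top_of_forall_coe_le _ fun L => ?_
    exact le_limsup_of_frequently' _ _ (hfreq L)
  have hEnt : entropyOn (fun f' g' => lpNorm p v (f' - g')) translateW K = ⊤ := by
    refine le_antisymm le_top ?_
    rw [← hlimsup]
    exact le_iSup₂_of_le 1 one_pos le_rfl
  refine le_antisymm le_top ?_
  rw [← hEnt]
  exact le_iSup₂_of_le K ⟨hKsub, hKcomp⟩ le_rfl
end
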